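/- The forgetful functor U : Exp → ωCat, from the category of strict ω-categories endowed with an expansion to the category of strict ω-categories, admits a left adjoint. -/

import Mathlib

/-! Formalization of notions from "Orientals as free algebras" (Ara–Lafont–Métayer),
following Burroni's expansion monad construction. Strict ω-categories are encoded
as a single set of cells with a dimension function, together with (total) source,
target, composition and unit operations, whose axioms are required to hold on the
appropriate domains of definition. -/

noncomputable section

namespace Orientals

open CategoryTheory

universe u v w

/-- The underlying data of a strict ω-category. `comp p x y` denotes the
`p`-composition `x ∘_p y` ("x after y"), meaningful when `p < dim x = dim y`
and the iterated `p`-source of `x` equals the iterated `p`-target of `y`. -/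
structure PreOmegaCat : Type (u + 1) where
  Cell : Type u
  dim : Cell → ℕ
  src : Cell → Cell
  tgt : Cell → Cell
  comp : ℕ → Cell → Cell → Cell
  unit : Cell → Cell

namespace PreOmegaCat

variable (C : PreOmegaCat.{u})

/-- Iterated source, down to dimension `p`. -/
def srcI (p : ℕ) (x : C.Cell) : C.Cell := C.src^[C.dim x - p] x

/-- Iterated target, down to dimension `p`. -/
def tgtI (p : ℕ) (x : C.Cell) : C.Cell := C.tgt^[C.dim x - p] x

/-- `x ∘_p y` is defined when `p < dim x = dim y` and `s_p x = t_p y`. -/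
abbrev Composable (p : ℕ) (x y : C.Cell) : Prop :=
  p < C.dim x ∧ C.dim y = C.dim x ∧ C.srcI p x = C.tgtI p y

/-- Pad a cell with iterated units up to dimension `m`. -/
def pad (m : ℕ) (x : C.Cell) : C.Cell := C.unit^[m - C.dim x] x

/-- Composition of two cells of possibly different dimensions, the lower
dimensional one being padded with units (the abbreviation `x ∘_q u` of the paper). -/
def mcomp (p : ℕ) (x y : C.Cell) : C.Cell :=
  C.comp p (C.pad (max (C.dim x) (C.dim y)) x) (C.pad (max (C.dim x) (C.dim y)) y)

end PreOmegaCat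

namespace PreOmegaCat

/-- `foldComp b s k = b ∘_0 s 0 ∘_1 s 1 ∘_2 ⋯ ∘_{k-1} s (k-1)`, parenthesized
with priority to the lowest dimensional compositions (i.e. left-nested). -/
def foldComp (C : PreOmegaCat.{u}) (b : C.Cell) (s : ℕ → C.Cell) : ℕ → C.Cell
  | 0 => b
  | k + 1 => C.mcomp k (foldComp C b s k) (s k)

end PreOmegaCat

/-- A strict ω-category: the data of a `PreOmegaCat` satisfying the globularity,
associativity, unit, interchange and functoriality-of-units laws on their domains
of definition. By convention, source and target fix the `0`-cells. -/
structure OmegaCat extends PreOmegaCat.{u} : Type (u + 1) where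
  dim_src : ∀ x, dim x ≠ 0 → dim (src x) = dim x - 1
  dim_tgt : ∀ x, dim x ≠ 0 → dim (tgt x) = dim x - 1
  src_dim0 : ∀ x, dim x = 0 → src x = x
  tgt_dim0 : ∀ x, dim x = 0 → tgt x = x
  glob_ss : ∀ x, 2 ≤ dim x → src (src x) = src (tgt x)
  glob_tt : ∀ x, 2 ≤ dim x → tgt (src x) = tgt (tgt x)
  dim_unit : ∀ x, dim (unit x) = dim x + 1
  src_unit : ∀ x, src (unit x) = x
  tgt_unit : ∀ x, tgt (unit x) = x
  dim_comp : ∀ p x y, toPreOmegaCat.Composable p x y → dim (comp p x y) = dim x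
  src_comp_top : ∀ p x y, toPreOmegaCat.Composable p x y → dim x = p + 1 →
    src (comp p x y) = src y
  tgt_comp_top : ∀ p x y, toPreOmegaCat.Composable p x y → dim x = p + 1 →
    tgt (comp p x y) = tgt x
  src_comp : ∀ p x y, toPreOmegaCat.Composable p x y → p + 1 < dim x →
    src (comp p x y) = comp p (src x) (src y)
  tgt_comp : ∀ p x y, toPreOmegaCat.Composable p x y → p + 1 < dim x →
    tgt (comp p x y) = comp p (tgt x) (tgt y)
  comp_assoc : ∀ p x y z, toPreOmegaCat.Composable p x y →
    toPreOmegaCat.Composable p y z →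
    comp p (comp p x y) z = comp p x (comp p y z)
  comp_unit_src : ∀ p x, p < dim x →
    comp p x (unit^[dim x - p] (toPreOmegaCat.srcI p x)) = x
  comp_unit_tgt : ∀ p x, p < dim x →
    comp p (unit^[dim x - p] (toPreOmegaCat.tgtI p x)) x = x
  interchange : ∀ p q x y x' y', q < p →
    toPreOmegaCat.Composable p x y → toPreOmegaCat.Composable p x' y' →
    toPreOmegaCat.Composable q x x' → toPreOmegaCat.Composable q y y' →
    comp q (comp p x y) (comp p x' y') = comp p (comp q x x') (comp q y y')
  unit_comp : ∀ p x y, toPreOmegaCat.Composable p x y →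
    unit (comp p x y) = comp p (unit x) (unit y)

/-- A (strict) ω-functor: a map of cells preserving dimension, sources, targets,
the defined compositions, and units. -/
@[ext]
structure OmegaFunctor (C D : OmegaCat.{u}) : Type u where
  map : C.Cell → D.Cell
  map_dim : ∀ x, D.dim (map x) = C.dim x
  map_src : ∀ x, map (C.src x) = D.src (map x)
  map_tgt : ∀ x, map (C.tgt x) = D.tgt (map x)
  map_comp : ∀ p x y, C.Composable p x y →
    map (C.comp p x y) = D.comp p (map x) (map y)
  map_unit : ∀ x, map (C.unit x) = D.unit (map x)

namespace OmegaFunctor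

/-- The identity ω-functor. -/
def idF (C : OmegaCat.{u}) : OmegaFunctor C C where
  map := _root_.id
  map_dim _ := rfl
  map_src _ := rfl
  map_tgt _ := rfl
  map_comp _ _ _ _ := rfl
  map_unit _ := rfl

theorem map_srcI {C D : OmegaCat.{u}} (f : OmegaFunctor C D) (p : ℕ) (x : C.Cell) :
    f.map (C.srcI p x) = D.srcI p (f.map x) := by
  show f.map (C.src^[C.dim x - p] x) = D.src^[D.dim (f.map x) - p] (f.map x)
  rw [f.map_dim]
  exact Function.Semiconj.iterate_right f.map_src (C.dim x - p) x

theorem map_tgtI {C D : OmegaCat.{u}} (f : OmegaFunctor C D) (p : ℕ) (x : C.Cell) :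
    f.map (C.tgtI p x) = D.tgtI p (f.map x) := by
  show f.map (C.tgt^[C.dim x - p] x) = D.tgt^[D.dim (f.map x) - p] (f.map x)
  rw [f.map_dim]
  exact Function.Semiconj.iterate_right f.map_tgt (C.dim x - p) x

theorem map_composable {C D : OmegaCat.{u}} (f : OmegaFunctor C D) {p : ℕ}
    {x y : C.Cell} (h : C.Composable p x y) : D.Composable p (f.map x) (f.map y) := by
  obtain ⟨h1, h2, h3⟩ := h
  refine ⟨?_, ?_, ?_⟩
  · rw [f.map_dim]; exact h1
  · rw [f.map_dim, f.map_dim]; exact h2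
  · rw [← f.map_srcI, ← f.map_tgtI, h3]

/-- Composition of ω-functors. -/
def compF {C D E : OmegaCat.{u}} (f : OmegaFunctor C D) (g : OmegaFunctor D E) :
    OmegaFunctor C E where
  map x := g.map (f.map x)
  map_dim x := by rw [g.map_dim, f.map_dim]
  map_src x := by rw [f.map_src, g.map_src]
  map_tgt x := by rw [f.map_tgt, g.map_tgt]
  map_comp p x y h := by
    rw [f.map_comp p x y h, g.map_comp p _ _ (f.map_composable h)]
  map_unit x := by rw [f.map_unit, g.map_unit]

end OmegaFunctor

/-- The category `ωCat` of strict ω-categories and strict ω-functors. -/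
instance : Category.{u, u + 1} OmegaCat.{u} where
  Hom := OmegaFunctor
  id := OmegaFunctor.idF
  comp := OmegaFunctor.compF
  id_comp f := by apply OmegaFunctor.ext; rfl
  comp_id f := by apply OmegaFunctor.ext; rfl
  assoc f g h := by apply OmegaFunctor.ext; rfl

/-- The underlying cell map of a morphism in `ωCat`. -/
def homMap {C D : OmegaCat.{u}} (f : C ⟶ D) : C.Cell → D.Cell := OmegaFunctor.map f

/-- The empty (initial) ω-category. -/
def emptyOmega : OmegaCat.{u} where
  Cell := PEmpty
  dim x := x.elim
  src x := x.elim
  tgt x := x.elim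
  comp _ x _ := x.elim
  unit x := x.elim
  dim_src x := x.elim
  dim_tgt x := x.elim
  src_dim0 x := x.elim
  tgt_dim0 x := x.elim
  glob_ss x := x.elim
  glob_tt x := x.elim
  dim_unit x := x.elim
  src_unit x := x.elim
  tgt_unit x := x.elim
  dim_comp _ x := x.elim
  src_comp_top _ x := x.elim
  tgt_comp_top _ x := x.elim
  src_comp _ x := x.elim
  tgt_comp _ x := x.elim
  comp_assoc _ x := x.elim
  comp_unit_src _ x := x.elim
  comp_unit_tgt _ x := x.elim
  interchange _ _ x := x.elim
  unit_comp _ x := x.elim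

/-- An expansion on an ω-category `C`: an origin `orig` (a `0`-cell) together
with, for each `n`-cell `x`, an `(n+1)`-cell `xi x` (written `ξ_x` in the paper)
with `ξ_x : orig → x` for `n = 0` and
`ξ_x : ξ_{t x_{n-1}} → x ∘_0 ξ_{s x_0} ∘_1 ⋯ ∘_{n-1} ξ_{s x_{n-1}}` for `n > 0`,
compatible with compositions and units, and degenerate on `orig` and on the
cells `ξ_u`. -/
structure Expansion (C : OmegaCat.{u}) : Type u where
  orig : C.Cell
  dim_orig : C.dim orig = 0
  xi : C.Cell → C.Cell
  dim_xi : ∀ x, C.dim (xi x) = C.dim x + 1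
  xi_src0 : ∀ x, C.dim x = 0 → C.src (xi x) = orig
  xi_src : ∀ x, C.dim x ≠ 0 → C.src (xi x) = xi (C.tgt x)
  xi_tgt : ∀ x, C.tgt (xi x) = C.foldComp x (fun i => xi (C.srcI i x)) (C.dim x)
  xi_comp : ∀ p x y, C.Composable p y x →
    xi (C.comp p y x) =
      C.mcomp (p + 1)
        (C.mcomp p (C.foldComp (C.tgtI (p + 1) y) (fun i => xi (C.srcI i x)) p) (xi x))
        (xi y)
  xi_unit : ∀ u, xi (C.unit u) = C.unit (xi u)
  xi_xi : ∀ u, xi (xi u) = C.unit (xi u)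
  xi_orig : xi orig = C.unit orig

/-- An object of the category `Exp`: an ω-category endowed with an expansion. -/
structure ExpCatObj : Type (u + 1) where
  cat : OmegaCat.{u}
  exp : Expansion cat

/-- A morphism of ω-categories with expansion: an ω-functor preserving the
origin and commuting with the expansions. -/
@[ext]
structure ExpHom (X Y : ExpCatObj.{u}) : Type u where
  func : OmegaFunctor X.cat Y.cat
  map_orig : func.map X.exp.orig = Y.exp.orig
  map_xi : ∀ x, func.map (X.exp.xi x) = Y.exp.xi (func.map x)

/-- The category `Exp` of ω-categories endowed with an expansion. -/
instance : Category.{u, u + 1} ExpCatObj.{u} where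
  Hom := ExpHom
  id X := ⟨OmegaFunctor.idF X.cat, rfl, fun _ => rfl⟩
  comp {X Y Z} f g :=
    ⟨OmegaFunctor.compF f.func g.func,
      by show g.func.map (f.func.map _) = _; rw [f.map_orig, g.map_orig],
      fun x => by show g.func.map (f.func.map _) = _; rw [f.map_xi, g.map_xi]; rfl⟩
  id_comp f := by apply ExpHom.ext; apply OmegaFunctor.ext; rfl
  comp_id f := by apply ExpHom.ext; apply OmegaFunctor.ext; rfl
  assoc f g h := by apply ExpHom.ext; apply OmegaFunctor.ext; rfl

/-- The forgetful functor `U : Exp → ωCat`. -/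
def forgetExp : ExpCatObj.{u} ⥤ OmegaCat.{u} where
  obj X := X.cat
  map f := f.func
  map_id _ := rfl
  map_comp _ _ := rfl

/-- The underlying ω-functor with expansion of a morphism in `Exp`. -/
def expHomOf {X Y : ExpCatObj.{u}} (f : X ⟶ Y) : ExpHom X Y := f

/-! ### Part 1: basic lemmas about iterated sources, targets and units -/

namespace OmegaLemmas

open PreOmegaCat

variable (C : OmegaCat.{u})

theorem dim_src' (x : C.Cell) : C.dim (C.src x) = C.dim x - 1 := by
  by_cases h : C.dim x = 0
  · rw [C.src_dim0 x h, h]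
  · exact C.dim_src x h

theorem dim_tgt' (x : C.Cell) : C.dim (C.tgt x) = C.dim x - 1 := by
  by_cases h : C.dim x = 0
  · rw [C.tgt_dim0 x h, h]
  · exact C.dim_tgt x h

theorem dim_srcIter (k : ℕ) (x : C.Cell) : C.dim (C.src^[k] x) = C.dim x - k := by
  induction k with
  | zero => rfl
  | succ k ih =>
      rw [Function.iterate_succ_apply', dim_src', ih]
      omega

theorem dim_tgtIter (k : ℕ) (x : C.Cell) : C.dim (C.tgt^[k] x) = C.dim x - k := by
  induction k with
  | zero => rfl
  | succ k ih =>
      rw [Function.iterate_succ_apply', dim_tgt', ih]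
      omega

theorem dim_srcI (p : ℕ) (x : C.Cell) (h : p ≤ C.dim x) : C.dim (C.srcI p x) = p := by
  rw [srcI, dim_srcIter]; omega

theorem dim_tgtI (p : ℕ) (x : C.Cell) (h : p ≤ C.dim x) : C.dim (C.tgtI p x) = p := by
  rw [tgtI, dim_tgtIter]; omega

theorem srcIter_fix0 (k : ℕ) (x : C.Cell) (h : C.dim x = 0) : C.src^[k] x = x := by
  induction k with
  | zero => rfl
  | succ k ih => rw [Function.iterate_succ_apply', ih, C.src_dim0 x h]

theorem tgtIter_fix0 (k : ℕ) (x : C.Cell) (h : C.dim x = 0) : C.tgt^[k] x = x := by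
  induction k with
  | zero => rfl
  | succ k ih => rw [Function.iterate_succ_apply', ih, C.tgt_dim0 x h]

theorem srcIter_tgt (x : C.Cell) {j : ℕ} (hj : 1 ≤ j) (h : 2 ≤ C.dim x) :
    C.src^[j] (C.tgt x) = C.src^[j] (C.src x) := by
  obtain ⟨i, rfl⟩ := Nat.exists_eq_add_of_le hj
  rw [Nat.add_comm, Function.iterate_add_apply, Function.iterate_add_apply, Function.iterate_one, ← C.glob_ss x h]

theorem tgtIter_src (x : C.Cell) {j : ℕ} (hj : 1 ≤ j) (h : 2 ≤ C.dim x) :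
    C.tgt^[j] (C.src x) = C.tgt^[j] (C.tgt x) := by
  obtain ⟨i, rfl⟩ := Nat.exists_eq_add_of_le hj
  rw [Nat.add_comm, Function.iterate_add_apply, Function.iterate_add_apply, Function.iterate_one, C.glob_tt x h]

theorem srcIter_tgtIter (x : C.Cell) {k j : ℕ} (hk : 1 ≤ k) (hkj : k + j ≤ C.dim x) :
    C.src^[k] (C.tgt^[j] x) = C.src^[k + j] x := by
  induction j generalizing k with
  | zero => rfl
  | succ j ih =>
      rw [Function.iterate_succ_apply', srcIter_tgt C _ hk (by rw [dim_tgtIter]; omega),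
        ← Function.iterate_succ_apply, ih (by omega) (by omega)]
      congr 1
      omega

theorem tgtIter_srcIter (x : C.Cell) {k j : ℕ} (hk : 1 ≤ k) (hkj : k + j ≤ C.dim x) :
    C.tgt^[k] (C.src^[j] x) = C.tgt^[k + j] x := by
  induction j generalizing k with
  | zero => rfl
  | succ j ih =>
      rw [Function.iterate_succ_apply', tgtIter_src C _ hk (by rw [dim_srcIter]; omega),
        ← Function.iterate_succ_apply, ih (by omega) (by omega)]
      congr 1
      omega


section Part2

theorem iterCongr {α : Type u} (f : α → α) {a b : ℕ} (h : a = b) (x : α) :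
    f^[a] x = f^[b] x := by rw [h]

theorem iterAdd {α : Type u} (f : α → α) {a b c : ℕ} (h : b + c = a) (x : α) :
    f^[a] x = f^[b] (f^[c] x) := by rw [← h, Function.iterate_add_apply]

theorem iterSucc {α : Type u} (f : α → α) {a b : ℕ} (h : a + 1 = b) (x : α) :
    f^[a] (f x) = f^[b] x := by subst h; exact (Function.iterate_succ_apply f a x).symm

theorem iterSucc' {α : Type u} (f : α → α) {a b : ℕ} (h : a + 1 = b) (x : α) :
    f (f^[a] x) = f^[b] x := by subst h; exact (Function.iterate_succ_apply' f a x).symm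

variable (C : OmegaCat.{u})

theorem srcI_srcI (x : C.Cell) {p q : ℕ} (h : q ≤ p) :
    C.srcI q (C.srcI p x) = C.srcI q x := by
  simp only [PreOmegaCat.srcI]
  rw [dim_srcIter, ← Function.iterate_add_apply]
  exact iterCongr _ (by omega) x

theorem tgtI_tgtI (x : C.Cell) {p q : ℕ} (h : q ≤ p) :
    C.tgtI q (C.tgtI p x) = C.tgtI q x := by
  simp only [PreOmegaCat.tgtI]
  rw [dim_tgtIter, ← Function.iterate_add_apply]
  exact iterCongr _ (by omega) x

theorem srcI_tgtI (x : C.Cell) {p q : ℕ} (h : q < p) :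
    C.srcI q (C.tgtI p x) = C.srcI q x := by
  by_cases hp : p < C.dim x
  · simp only [PreOmegaCat.srcI, PreOmegaCat.tgtI]
    rw [dim_tgtIter, srcIter_tgtIter C x (by omega) (by omega)]
    exact iterCongr _ (by omega) x
  · have h0 : C.dim x - p = 0 := by omega
    simp only [PreOmegaCat.tgtI, h0, Function.iterate_zero_apply]

theorem tgtI_srcI (x : C.Cell) {p q : ℕ} (h : q < p) :
    C.tgtI q (C.srcI p x) = C.tgtI q x := by
  by_cases hp : p < C.dim x
  · simp only [PreOmegaCat.srcI, PreOmegaCat.tgtI]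
    rw [dim_srcIter, tgtIter_srcIter C x (by omega) (by omega)]
    exact iterCongr _ (by omega) x
  · have h0 : C.dim x - p = 0 := by omega
    simp only [PreOmegaCat.srcI, h0, Function.iterate_zero_apply]

/-! units -/

theorem dim_unitIter (k : ℕ) (x : C.Cell) : C.dim (C.unit^[k] x) = C.dim x + k := by
  induction k with
  | zero => rfl
  | succ k ih =>
      rw [Function.iterate_succ_apply', C.dim_unit, ih]
      omega

theorem srcIter_unitIter (k : ℕ) (x : C.Cell) : C.src^[k] (C.unit^[k] x) = x := by
  induction k generalizing x with
  | zero => rfl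
  | succ k ih =>
      rw [Function.iterate_succ_apply (C.unit), Function.iterate_succ_apply' (C.src),
        ih (C.unit x), C.src_unit]

theorem tgtIter_unitIter (k : ℕ) (x : C.Cell) : C.tgt^[k] (C.unit^[k] x) = x := by
  induction k generalizing x with
  | zero => rfl
  | succ k ih =>
      rw [Function.iterate_succ_apply (C.unit), Function.iterate_succ_apply' (C.tgt),
        ih (C.unit x), C.tgt_unit]

theorem srcI_unitIter_low (x : C.Cell) {p k : ℕ} (hp : p ≤ C.dim x) :
    C.srcI p (C.unit^[k] x) = C.srcI p x := by
  simp only [PreOmegaCat.srcI]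
  rw [dim_unitIter, iterAdd C.src (b := C.dim x - p) (c := k) (by omega), srcIter_unitIter]

theorem tgtI_unitIter_low (x : C.Cell) {p k : ℕ} (hp : p ≤ C.dim x) :
    C.tgtI p (C.unit^[k] x) = C.tgtI p x := by
  simp only [PreOmegaCat.tgtI]
  rw [dim_unitIter, iterAdd C.tgt (b := C.dim x - p) (c := k) (by omega), tgtIter_unitIter]

theorem srcI_unitIter_high (x : C.Cell) {p k : ℕ} (h1 : C.dim x ≤ p) (h2 : p ≤ C.dim x + k) :
    C.srcI p (C.unit^[k] x) = C.unit^[p - C.dim x] x := by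
  have hk : k = (C.dim x + k - p) + (p - C.dim x) := by omega
  simp only [PreOmegaCat.srcI]
  rw [dim_unitIter, iterAdd C.unit (b := C.dim x + k - p) (c := p - C.dim x) (by omega) x,
    iterCongr C.src (b := C.dim x + k - p) (by omega), srcIter_unitIter]

theorem tgtI_unitIter_high (x : C.Cell) {p k : ℕ} (h1 : C.dim x ≤ p) (h2 : p ≤ C.dim x + k) :
    C.tgtI p (C.unit^[k] x) = C.unit^[p - C.dim x] x := by
  simp only [PreOmegaCat.tgtI]
  rw [dim_unitIter, iterAdd C.unit (b := C.dim x + k - p) (c := p - C.dim x) (by omega) x,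
    iterCongr C.tgt (b := C.dim x + k - p) (by omega), tgtIter_unitIter]

theorem dim_pad (m : ℕ) (x : C.Cell) : C.dim (C.pad m x) = max m (C.dim x) := by
  rw [PreOmegaCat.pad, dim_unitIter]
  omega

theorem pad_of_le {m : ℕ} (x : C.Cell) (h : m ≤ C.dim x) : C.pad m x = x := by
  rw [PreOmegaCat.pad, show m - C.dim x = 0 by omega, Function.iterate_zero_apply]

/-! compositions -/

theorem composable_src {p : ℕ} {x y : C.Cell} (hc : C.Composable p x y)
    (h : p + 1 < C.dim x) : C.Composable p (C.src x) (C.src y) := by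
  obtain ⟨h1, h2, h3⟩ := hc
  refine ⟨by rw [dim_src']; omega, by rw [dim_src', dim_src']; omega, ?_⟩
  simp only [PreOmegaCat.srcI, PreOmegaCat.tgtI, dim_src']
  rw [iterSucc C.src (b := C.dim x - p) (by omega) x,
    tgtIter_src C y (by omega) (by omega),
    iterSucc C.tgt (b := C.dim y - p) (by omega) y]
  exact h3

theorem composable_tgt {p : ℕ} {x y : C.Cell} (hc : C.Composable p x y)
    (h : p + 1 < C.dim x) : C.Composable p (C.tgt x) (C.tgt y) := by
  obtain ⟨h1, h2, h3⟩ := hc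
  refine ⟨by rw [dim_tgt']; omega, by rw [dim_tgt', dim_tgt']; omega, ?_⟩
  simp only [PreOmegaCat.srcI, PreOmegaCat.tgtI, dim_tgt']
  rw [srcIter_tgt C x (by omega) (by omega),
    iterSucc C.src (b := C.dim x - p) (by omega) x,
    iterSucc C.tgt (b := C.dim y - p) (by omega) y]
  exact h3

theorem srcIter_comp {p : ℕ} {x y : C.Cell} (hc : C.Composable p x y) :
    ∀ k, k ≤ C.dim x - (p + 1) →
      C.src^[k] (C.comp p x y) = C.comp p (C.src^[k] x) (C.src^[k] y) ∧
      C.Composable p (C.src^[k] x) (C.src^[k] y) := by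
  intro k
  induction k with
  | zero => exact fun _ => ⟨rfl, hc⟩
  | succ k ih =>
      intro hk
      obtain ⟨he, hcc⟩ := ih (by omega)
      have hd : C.dim (C.src^[k] x) = C.dim x - k := dim_srcIter C k x
      have hx : C.src (C.src^[k] x) = C.src^[k+1] x := iterSucc' C.src rfl x
      have hy : C.src (C.src^[k] y) = C.src^[k+1] y := iterSucc' C.src rfl y
      constructor
      · rw [Function.iterate_succ_apply', he,
          C.src_comp p _ _ hcc (by rw [hd]; omega), hx, hy]
      · have := composable_src C hcc (by rw [hd]; omega)
        rwa [hx, hy] at this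

theorem tgtIter_comp {p : ℕ} {x y : C.Cell} (hc : C.Composable p x y) :
    ∀ k, k ≤ C.dim x - (p + 1) →
      C.tgt^[k] (C.comp p x y) = C.comp p (C.tgt^[k] x) (C.tgt^[k] y) ∧
      C.Composable p (C.tgt^[k] x) (C.tgt^[k] y) := by
  intro k
  induction k with
  | zero => exact fun _ => ⟨rfl, hc⟩
  | succ k ih =>
      intro hk
      obtain ⟨he, hcc⟩ := ih (by omega)
      have hd : C.dim (C.tgt^[k] x) = C.dim x - k := dim_tgtIter C k x
      have hx : C.tgt (C.tgt^[k] x) = C.tgt^[k+1] x := iterSucc' C.tgt rfl x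
      have hy : C.tgt (C.tgt^[k] y) = C.tgt^[k+1] y := iterSucc' C.tgt rfl y
      constructor
      · rw [Function.iterate_succ_apply', he,
          C.tgt_comp p _ _ hcc (by rw [hd]; omega), hx, hy]
      · have := composable_tgt C hcc (by rw [hd]; omega)
        rwa [hx, hy] at this

theorem srcI_comp_high {p q : ℕ} {x y : C.Cell} (hc : C.Composable p x y)
    (hq : p < q) (hq2 : q ≤ C.dim x) :
    C.srcI q (C.comp p x y) = C.comp p (C.srcI q x) (C.srcI q y) ∧
      C.Composable p (C.srcI q x) (C.srcI q y) := by
  have hd : C.dim (C.comp p x y) = C.dim x := C.dim_comp p x y hc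
  obtain ⟨he, hcc⟩ := srcIter_comp C hc (C.dim x - q) (by omega)
  have e1 : C.srcI q (C.comp p x y) = C.src^[C.dim x - q] (C.comp p x y) := by
    simp only [PreOmegaCat.srcI, hd]
  have e2 : C.srcI q x = C.src^[C.dim x - q] x := rfl
  have e3 : C.srcI q y = C.src^[C.dim x - q] y := by
    simp only [PreOmegaCat.srcI, hc.2.1]
  refine ⟨?_, ?_⟩
  · rw [e1, e2, e3]; exact he
  · rw [e2, e3]; exact hcc

theorem tgtI_comp_high {p q : ℕ} {x y : C.Cell} (hc : C.Composable p x y)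
    (hq : p < q) (hq2 : q ≤ C.dim x) :
    C.tgtI q (C.comp p x y) = C.comp p (C.tgtI q x) (C.tgtI q y) ∧
      C.Composable p (C.tgtI q x) (C.tgtI q y) := by
  have hd : C.dim (C.comp p x y) = C.dim x := C.dim_comp p x y hc
  obtain ⟨he, hcc⟩ := tgtIter_comp C hc (C.dim x - q) (by omega)
  have e1 : C.tgtI q (C.comp p x y) = C.tgt^[C.dim x - q] (C.comp p x y) := by
    simp only [PreOmegaCat.tgtI, hd]
  have e2 : C.tgtI q x = C.tgt^[C.dim x - q] x := rfl
  have e3 : C.tgtI q y = C.tgt^[C.dim x - q] y := by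
    simp only [PreOmegaCat.tgtI, hc.2.1]
  refine ⟨?_, ?_⟩
  · rw [e1, e2, e3]; exact he
  · rw [e2, e3]; exact hcc

theorem srcI_comp_low {p q : ℕ} {x y : C.Cell} (hc : C.Composable p x y)
    (hq : q ≤ p) : C.srcI q (C.comp p x y) = C.srcI q y := by
  obtain ⟨he, hcc⟩ := srcIter_comp C hc (C.dim x - (p+1)) (by omega)
  have hdx : C.dim (C.src^[C.dim x - (p+1)] x) = p + 1 := by rw [dim_srcIter]; omega
  have hstep := C.src_comp_top p _ _ hcc hdx
  have key : C.src^[1 + (C.dim x - (p+1))] (C.comp p x y) =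
      C.src^[1 + (C.dim x - (p+1))] y := by
    rw [Function.iterate_add_apply, Function.iterate_add_apply, he,
      Function.iterate_one, hstep]
  have main : C.src^[C.dim x - q] (C.comp p x y) = C.src^[C.dim x - q] y := by
    rw [iterAdd C.src (b := p - q) (c := 1 + (C.dim x - (p+1))) (by omega),
      iterAdd C.src (b := p - q) (c := 1 + (C.dim x - (p+1))) (by omega) y, key]
  have e1 : C.srcI q (C.comp p x y) = C.src^[C.dim x - q] (C.comp p x y) := by
    simp only [PreOmegaCat.srcI, C.dim_comp p x y hc]
  have e3 : C.srcI q y = C.src^[C.dim x - q] y := by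
    simp only [PreOmegaCat.srcI, hc.2.1]
  rw [e1, e3]
  exact main

theorem tgtI_comp_low {p q : ℕ} {x y : C.Cell} (hc : C.Composable p x y)
    (hq : q ≤ p) : C.tgtI q (C.comp p x y) = C.tgtI q x := by
  obtain ⟨he, hcc⟩ := tgtIter_comp C hc (C.dim x - (p+1)) (by omega)
  have hdx : C.dim (C.tgt^[C.dim x - (p+1)] x) = p + 1 := by rw [dim_tgtIter]; omega
  have hstep := C.tgt_comp_top p _ _ hcc hdx
  have key : C.tgt^[1 + (C.dim x - (p+1))] (C.comp p x y) =
      C.tgt^[1 + (C.dim x - (p+1))] x := by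
    rw [Function.iterate_add_apply, Function.iterate_add_apply, he,
      Function.iterate_one, hstep]
  have main : C.tgt^[C.dim x - q] (C.comp p x y) = C.tgt^[C.dim x - q] x := by
    rw [iterAdd C.tgt (b := p - q) (c := 1 + (C.dim x - (p+1))) (by omega),
      iterAdd C.tgt (b := p - q) (c := 1 + (C.dim x - (p+1))) (by omega) x, key]
  have e1 : C.tgtI q (C.comp p x y) = C.tgt^[C.dim x - q] (C.comp p x y) := by
    simp only [PreOmegaCat.tgtI, C.dim_comp p x y hc]
  rw [e1]
  exact main

end Part2

section Part3

variable (C : OmegaCat.{u})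

theorem foldComp_congr (b : C.Cell) {s s' : ℕ → C.Cell} (k : ℕ) (h : ∀ i, i < k → s i = s' i) :
    C.foldComp b s k = C.foldComp b s' k := by
  induction k with
  | zero => rfl
  | succ k ih =>
      simp only [PreOmegaCat.foldComp]
      rw [ih (fun i hi => h i (by omega)), h k (by omega)]

theorem foldStepEq (b : C.Cell) (s : ℕ → C.Cell) (k : ℕ)
    (hA : C.dim (C.foldComp b s k) = C.dim b) (hS : C.dim (s k) = k + 1)
    (h : k + 1 ≤ C.dim b) :
    C.foldComp b s (k+1) = C.comp k (C.foldComp b s k) (C.unit^[C.dim b - (k+1)] (s k)) := by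
  simp only [PreOmegaCat.foldComp, PreOmegaCat.mcomp]
  rw [hA, hS, show max (C.dim b) (k+1) = C.dim b by omega,
    pad_of_le C _ (le_of_eq hA.symm), PreOmegaCat.pad, hS]

variable (E : Expansion C)

theorem dim_xs (x : C.Cell) {k : ℕ} (hk : k ≤ C.dim x) :
    C.dim (E.xi (C.srcI k x)) = k + 1 := by
  rw [E.dim_xi, dim_srcI C k x hk]

theorem tgt_xi_srcI (x : C.Cell) (k : ℕ) (hk : k ≤ C.dim x) :
    C.tgt (E.xi (C.srcI k x)) = C.foldComp (C.srcI k x) (fun i => E.xi (C.srcI i x)) k := by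
  rw [E.xi_tgt, dim_srcI C k x hk]
  exact foldComp_congr C _ k (fun i hi => by rw [srcI_srcI C x (by omega : i ≤ k)])

theorem chain (x : C.Cell) : ∀ (k : ℕ) (c : C.Cell), k ≤ C.dim c →
    (∀ i, i < k → C.srcI i c = C.srcI i x) →
    (C.dim (C.foldComp c (fun i => E.xi (C.srcI i x)) k) = C.dim c) ∧
    (∀ q, k ≤ q → q ≤ C.dim c →
      C.srcI q (C.foldComp c (fun i => E.xi (C.srcI i x)) k) =
        C.foldComp (C.srcI q c) (fun i => E.xi (C.srcI i x)) k) ∧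
    (∀ q, k ≤ q → q ≤ C.dim c →
      C.tgtI q (C.foldComp c (fun i => E.xi (C.srcI i x)) k) =
        C.foldComp (C.tgtI q c) (fun i => E.xi (C.srcI i x)) k) ∧
    (k < C.dim c → C.srcI k c = C.srcI k x →
      C.Composable k (C.foldComp c (fun i => E.xi (C.srcI i x)) k)
        (C.unit^[C.dim c - (k+1)] (E.xi (C.srcI k x)))) := by
  intro k
  induction k with
  | zero =>
      intro c h0 _
      refine ⟨rfl, fun q _ _ => rfl, fun q _ _ => rfl, ?_⟩
      intro hk0 hs0
      rw [show C.foldComp c (fun i => E.xi (C.srcI i x)) 0 = c from rfl]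
      have hd0x : C.dim (C.srcI 0 x) = 0 := by
        rw [← hs0, dim_srcI C 0 c (by omega)]
      have hdS : C.dim (E.xi (C.srcI 0 x)) = 1 := by rw [E.dim_xi, hd0x]
      refine ⟨by omega, by rw [dim_unitIter, hdS]; omega, ?_⟩
      rw [tgtI_unitIter_low C _ (by omega)]
      have e1 : C.tgtI 0 (E.xi (C.srcI 0 x)) = C.tgt (E.xi (C.srcI 0 x)) := by
        simp only [PreOmegaCat.tgtI]
        rw [hdS, show (1:ℕ) - 0 = 1 by omega, Function.iterate_one]
      rw [e1, tgt_xi_srcI C E x 0 (by omega)]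
      simp only [PreOmegaCat.foldComp]
      exact hs0
  | succ k IH =>
      intro c hdim hlt
      obtain ⟨Ak, Bk, Ck, Dk⟩ := IH c (by omega) (fun i hi => hlt i (by omega))
      have hsk := hlt k (by omega)
      have hdkc : C.dim (C.srcI k c) = k := dim_srcI C k c (by omega)
      have hkx : k ≤ C.dim x := by
        have h1 : C.dim (C.srcI k x) = k := by rw [← hsk, hdkc]
        have h2 := dim_srcIter C (C.dim x - k) x
        simp only [PreOmegaCat.srcI] at h1
        omega
      have hdS : C.dim (E.xi (C.srcI k x)) = k + 1 := dim_xs C E x hkx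
      have hcomp := Dk (by omega) hsk
      have hstep := foldStepEq C c (fun i => E.xi (C.srcI i x)) k Ak hdS (by omega)
      have A1 : C.dim (C.foldComp c (fun i => E.xi (C.srcI i x)) (k+1)) = C.dim c := by
        rw [hstep, C.dim_comp _ _ _ hcomp, Ak]
      have B1 : ∀ q, k+1 ≤ q → q ≤ C.dim c →
          C.srcI q (C.foldComp c (fun i => E.xi (C.srcI i x)) (k+1)) =
            C.foldComp (C.srcI q c) (fun i => E.xi (C.srcI i x)) (k+1) := by
        intro q hq1 hq2
        have hdc' : C.dim (C.srcI q c) = q := dim_srcI C q c hq2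
        obtain ⟨Ak', _, _, _⟩ := IH (C.srcI q c) (by omega)
          (fun i hi => by rw [srcI_srcI C c (by omega : i ≤ q)]; exact hlt i (by omega))
        have hstep' := foldStepEq C (C.srcI q c) (fun i => E.xi (C.srcI i x)) k Ak' hdS
          (by omega)
        obtain ⟨hsrc, _⟩ := srcI_comp_high C hcomp (show k < q by omega)
          (by rw [Ak]; exact hq2)
        rw [hstep, hsrc, Bk q (by omega) hq2,
          srcI_unitIter_high C _ (by rw [hdS]; omega) (by rw [hdS]; omega),
          hstep', hdS, hdc']
      have C1 : ∀ q, k+1 ≤ q → q ≤ C.dim c →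
          C.tgtI q (C.foldComp c (fun i => E.xi (C.srcI i x)) (k+1)) =
            C.foldComp (C.tgtI q c) (fun i => E.xi (C.srcI i x)) (k+1) := by
        intro q hq1 hq2
        have hdc' : C.dim (C.tgtI q c) = q := dim_tgtI C q c hq2
        obtain ⟨Ak', _, _, _⟩ := IH (C.tgtI q c) (by omega)
          (fun i hi => by
            rw [srcI_tgtI C c (show i < q by omega)]; exact hlt i (by omega))
        have hstep' := foldStepEq C (C.tgtI q c) (fun i => E.xi (C.srcI i x)) k Ak' hdS
          (by omega)
        obtain ⟨htgt, _⟩ := tgtI_comp_high C hcomp (show k < q by omega)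
          (by rw [Ak]; exact hq2)
        rw [hstep, htgt, Ck q (by omega) hq2,
          tgtI_unitIter_high C _ (by rw [hdS]; omega) (by rw [hdS]; omega),
          hstep', hdS, hdc']
      refine ⟨A1, B1, C1, ?_⟩
      intro hlt1 hs1
      have hd1c : C.dim (C.srcI (k+1) c) = k+1 := dim_srcI C (k+1) c (by omega)
      have hd1x : k + 1 ≤ C.dim x := by
        have h1 : C.dim (C.srcI (k+1) x) = k+1 := by rw [← hs1, hd1c]
        have h2 := dim_srcIter C (C.dim x - (k+1)) x
        simp only [PreOmegaCat.srcI] at h1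
        omega
      have hdS1 : C.dim (E.xi (C.srcI (k+1) x)) = k + 2 := dim_xs C E x hd1x
      refine ⟨by rw [A1]; omega, by rw [dim_unitIter, hdS1, A1]; omega, ?_⟩
      rw [B1 (k+1) le_rfl (by omega), tgtI_unitIter_low C _ (by rw [hdS1]; omega)]
      have e1 : C.tgtI (k+1) (E.xi (C.srcI (k+1) x)) = C.tgt (E.xi (C.srcI (k+1) x)) := by
        simp only [PreOmegaCat.tgtI]
        rw [hdS1, show k+2 - (k+1) = 1 by omega, Function.iterate_one]
      rw [e1, tgt_xi_srcI C E x (k+1) hd1x, hs1]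

end Part3

section Part4

variable (C : OmegaCat.{u}) (E : Expansion C)

theorem srcIter_xi (w : C.Cell) : ∀ j, j ≤ C.dim w →
    C.src^[j] (E.xi w) = E.xi (C.tgt^[j] w) := by
  intro j
  induction j generalizing w with
  | zero => intro _; rfl
  | succ j ih =>
      intro hj
      rw [Function.iterate_succ_apply, E.xi_src w (by omega),
        ih (C.tgt w) (by rw [dim_tgt']; omega), ← Function.iterate_succ_apply]

theorem srcI_xi (w : C.Cell) {q : ℕ} (h1 : 1 ≤ q) (h2 : q ≤ C.dim w + 1) :
    C.srcI q (E.xi w) = E.xi (C.tgtI (q-1) w) := by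
  simp only [PreOmegaCat.srcI, PreOmegaCat.tgtI, E.dim_xi]
  rw [srcIter_xi C E w (C.dim w + 1 - q) (by omega)]
  exact congrArg E.xi (iterCongr C.tgt (by omega) w)

theorem dim_xs_of_eq (x c : C.Cell) (k : ℕ) (hk : k ≤ C.dim c)
    (h : C.srcI k c = C.srcI k x) : C.dim (E.xi (C.srcI k x)) = k + 1 := by
  have h1 : C.dim (C.srcI k x) = k := by rw [← h, dim_srcI C k c hk]
  rw [E.dim_xi, h1]

theorem fold_tgtI_low (x : C.Cell) : ∀ (k : ℕ) (c : C.Cell), k ≤ C.dim c →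
    (∀ i, i < k → C.srcI i c = C.srcI i x) → ∀ p, p ≤ k →
    C.tgtI p (C.foldComp c (fun i => E.xi (C.srcI i x)) k) =
      C.foldComp (C.tgtI p c) (fun i => E.xi (C.srcI i x)) p := by
  intro k
  induction k with
  | zero =>
      intro c h0 _ p hp
      obtain rfl : p = 0 := by omega
      rfl
  | succ k ih =>
      intro c hdim hlt p hp
      by_cases hpk : p = k + 1
      · subst hpk
        exact (chain C E x (k+1) c hdim hlt).2.2.1 (k+1) le_rfl hdim
      · obtain ⟨Ak, Bk, Ck, Dk⟩ := chain C E x k c (by omega) (fun i hi => hlt i (by omega))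
        have hsk := hlt k (by omega)
        have hdS := dim_xs_of_eq C E x c k (by omega) hsk
        have hstep := foldStepEq C c (fun i => E.xi (C.srcI i x)) k Ak hdS (by omega)
        have hcomp := Dk (by omega) hsk
        rw [hstep, tgtI_comp_low C hcomp (show p ≤ k by omega),
          ih c (by omega) (fun i hi => hlt i (by omega)) p (by omega)]

theorem xiComp_pre (p : ℕ) (x y : C.Cell) (hc : C.Composable p y x) :
    ∀ i, i < p → C.srcI i (C.tgtI (p+1) y) = C.srcI i x := by
  obtain ⟨hp, hdx, hsrc⟩ := hc
  intro i hi
  rw [srcI_tgtI C y (show i < p+1 by omega), ← srcI_srcI C y (show i ≤ p by omega), hsrc,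
    srcI_tgtI C x (show i < p by omega)]

theorem xiCompFacts (p : ℕ) (x y : C.Cell) (hc : C.Composable p y x) :
    C.dim (C.foldComp (C.tgtI (p+1) y) (fun i => E.xi (C.srcI i x)) p) = p + 1 ∧
    C.Composable p
      (C.pad (C.dim y + 1) (C.foldComp (C.tgtI (p+1) y) (fun i => E.xi (C.srcI i x)) p))
      (C.pad (C.dim y + 1) (E.xi x)) ∧
    C.dim (C.mcomp p (C.foldComp (C.tgtI (p+1) y) (fun i => E.xi (C.srcI i x)) p) (E.xi x))
      = C.dim y + 1 ∧
    C.Composable (p+1)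
      (C.pad (C.dim y + 1)
        (C.mcomp p (C.foldComp (C.tgtI (p+1) y) (fun i => E.xi (C.srcI i x)) p) (E.xi x)))
      (C.pad (C.dim y + 1) (E.xi y)) ∧
    C.mcomp p (C.foldComp (C.tgtI (p+1) y) (fun i => E.xi (C.srcI i x)) p) (E.xi x) =
      C.comp p
        (C.pad (C.dim y + 1) (C.foldComp (C.tgtI (p+1) y) (fun i => E.xi (C.srcI i x)) p))
        (C.pad (C.dim y + 1) (E.xi x)) ∧
    C.mcomp (p+1)
        (C.mcomp p (C.foldComp (C.tgtI (p+1) y) (fun i => E.xi (C.srcI i x)) p) (E.xi x))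
        (E.xi y) =
      C.comp (p+1)
        (C.pad (C.dim y + 1)
          (C.mcomp p (C.foldComp (C.tgtI (p+1) y) (fun i => E.xi (C.srcI i x)) p) (E.xi x)))
        (C.pad (C.dim y + 1) (E.xi y)) := by
  obtain ⟨hp, hdx, hsrc⟩ := hc
  have hb_dim : C.dim (C.tgtI (p+1) y) = p + 1 := dim_tgtI C (p+1) y (by omega)
  have hpre : ∀ i, i < p → C.srcI i (C.tgtI (p+1) y) = C.srcI i x := by
    intro i hi
    rw [srcI_tgtI C y (show i < p+1 by omega), ← srcI_srcI C y (show i ≤ p by omega), hsrc,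
      srcI_tgtI C x (show i < p by omega)]
  obtain ⟨Af, Bf, Cf, Df⟩ := chain C E x p (C.tgtI (p+1) y) (by omega) hpre
  have Af' : C.dim (C.foldComp (C.tgtI (p+1) y) (fun i => E.xi (C.srcI i x)) p) = p + 1 := by
    rw [Af, hb_dim]
  have hdxi_x : C.dim (E.xi x) = C.dim y + 1 := by rw [E.dim_xi, hdx]
  have hdxi_y : C.dim (E.xi y) = C.dim y + 1 := by rw [E.dim_xi]
  obtain ⟨Ax, Bx, Cx, Dx⟩ := chain C E x (C.dim x) x le_rfl (fun _ _ => rfl)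
  have hsb : C.srcI p (C.tgtI (p+1) y) = C.tgtI p x := by
    rw [srcI_tgtI C y (show p < p+1 by omega), hsrc]
  have mid : C.Composable p
      (C.pad (C.dim y + 1) (C.foldComp (C.tgtI (p+1) y) (fun i => E.xi (C.srcI i x)) p))
      (C.pad (C.dim y + 1) (E.xi x)) := by
    refine ⟨?_, ?_, ?_⟩
    · rw [dim_pad, Af']; omega
    · rw [dim_pad, dim_pad, Af', hdxi_x]; omega
    · rw [PreOmegaCat.pad, Af', srcI_unitIter_low C _ (by rw [Af']; omega),
        Bf p le_rfl (by omega), hsb, pad_of_le C _ hdxi_x.ge]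
      have e1 : C.tgtI p (E.xi x) = C.tgt^[C.dim x - p] (C.tgt (E.xi x)) := by
        simp only [PreOmegaCat.tgtI, E.dim_xi]
        rw [iterAdd C.tgt (b := C.dim x - p) (c := 1) (by omega), Function.iterate_one]
      have e2 : C.tgt^[C.dim x - p] (C.foldComp x (fun i => E.xi (C.srcI i x)) (C.dim x)) =
          C.tgtI p (C.foldComp x (fun i => E.xi (C.srcI i x)) (C.dim x)) := by
        simp only [PreOmegaCat.tgtI]
        rw [Ax]
      rw [e1, E.xi_tgt x, e2, fold_tgtI_low C E x (C.dim x) x le_rfl (fun _ _ => rfl) p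
        (by omega)]
  have hm : C.mcomp p (C.foldComp (C.tgtI (p+1) y) (fun i => E.xi (C.srcI i x)) p) (E.xi x) =
      C.comp p
        (C.pad (C.dim y + 1) (C.foldComp (C.tgtI (p+1) y) (fun i => E.xi (C.srcI i x)) p))
        (C.pad (C.dim y + 1) (E.xi x)) := by
    simp only [PreOmegaCat.mcomp]
    rw [Af', hdxi_x, show max (p+1) (C.dim y + 1) = C.dim y + 1 by omega]
  have hdm : C.dim (C.mcomp p
      (C.foldComp (C.tgtI (p+1) y) (fun i => E.xi (C.srcI i x)) p) (E.xi x)) = C.dim y + 1 := by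
    rw [hm, C.dim_comp _ _ _ mid, dim_pad, Af']
    omega
  have hm2 : C.mcomp (p+1)
      (C.mcomp p (C.foldComp (C.tgtI (p+1) y) (fun i => E.xi (C.srcI i x)) p) (E.xi x))
      (E.xi y) =
      C.comp (p+1)
        (C.pad (C.dim y + 1)
          (C.mcomp p (C.foldComp (C.tgtI (p+1) y) (fun i => E.xi (C.srcI i x)) p) (E.xi x)))
        (C.pad (C.dim y + 1) (E.xi y)) := by
    conv_lhs => rw [PreOmegaCat.mcomp]
    rw [hdm, hdxi_y, max_self]
  refine ⟨Af', mid, hdm, ?_, hm, hm2⟩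
  refine ⟨?_, ?_, ?_⟩
  · rw [dim_pad, hdm]; omega
  · rw [dim_pad, dim_pad, hdm, hdxi_y]
  · rw [pad_of_le C _ hdm.ge, pad_of_le C _ hdxi_y.ge, hm]
    obtain ⟨hsplit, _⟩ := srcI_comp_high C mid (show p < p+1 by omega)
      (by rw [dim_pad, Af']; omega)
    rw [hsplit]
    have e3 : C.srcI (p+1)
        (C.pad (C.dim y + 1) (C.foldComp (C.tgtI (p+1) y) (fun i => E.xi (C.srcI i x)) p)) =
        C.foldComp (C.tgtI (p+1) y) (fun i => E.xi (C.srcI i x)) p := by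
      rw [PreOmegaCat.pad, Af', srcI_unitIter_high C _ Af'.le (by rw [Af']; omega), Af',
        show p + 1 - (p+1) = 0 by omega, Function.iterate_zero_apply]
    have e4 : C.srcI (p+1) (C.pad (C.dim y + 1) (E.xi x)) = E.xi (C.tgtI p x) := by
      rw [pad_of_le C _ hdxi_x.ge, srcI_xi C E x (by omega) (by omega),
        show p + 1 - 1 = p by omega]
    rw [e3, e4]
    have e5 : C.tgtI (p+1) (E.xi y) =
        C.tgtI (p+1) (C.foldComp y (fun i => E.xi (C.srcI i y)) (C.dim y)) := by
      have g1 : C.tgtI (p+1) (E.xi y) = C.tgt^[C.dim y - (p+1)] (C.tgt (E.xi y)) := by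
        simp only [PreOmegaCat.tgtI, E.dim_xi]
        rw [iterAdd C.tgt (b := C.dim y - (p+1)) (c := 1) (by omega), Function.iterate_one]
      obtain ⟨Ay, _, _, _⟩ := chain C E y (C.dim y) y le_rfl (fun _ _ => rfl)
      rw [g1, E.xi_tgt y]
      simp only [PreOmegaCat.tgtI]
      rw [Ay]
    rw [e5, fold_tgtI_low C E y (C.dim y) y le_rfl (fun _ _ => rfl) (p+1) (by omega)]
    obtain ⟨Ay', _, _, _⟩ := chain C E y p (C.tgtI (p+1) y) (by rw [hb_dim]; omega)
      (fun i hi => by rw [srcI_tgtI C y (show i < p+1 by omega)])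
    have hdSy : C.dim (E.xi (C.srcI p y)) = p+1 := by
      rw [E.dim_xi, dim_srcI C p y (by omega)]
    have hstepy := foldStepEq C (C.tgtI (p+1) y) (fun i => E.xi (C.srcI i y)) p Ay' hdSy
      (by rw [hb_dim])
    rw [hstepy, show C.dim (C.tgtI (p+1) y) - (p+1) = 0 from by rw [hb_dim]; omega,
      Function.iterate_zero_apply, ← hsrc]
    refine congrArg (fun z => C.comp p z (E.xi (C.srcI p y))) ?_
    refine foldComp_congr C _ p ?_
    intro i hi
    have hxy : C.srcI i y = C.srcI i x := by
      rw [← srcI_srcI C y (show i ≤ p by omega), hsrc, srcI_tgtI C x (show i < p by omega)]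
    rw [hxy]

end Part4

section LimitOmega

open CategoryTheory

theorem srcI_unit (C : OmegaCat.{u}) (x : C.Cell) {p : ℕ} (hp : p ≤ C.dim x) :
    C.srcI p (C.unit x) = C.srcI p x := by
  have := srcI_unitIter_low C x (k := 1) hp
  rwa [Function.iterate_one] at this

theorem tgtI_unit (C : OmegaCat.{u}) (x : C.Cell) {p : ℕ} (hp : p ≤ C.dim x) :
    C.tgtI p (C.unit x) = C.tgtI p x := by
  have := tgtI_unitIter_low C x (k := 1) hp
  rwa [Function.iterate_one] at this

variable {J : Type u} [Category.{u} J]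

/-- Cells of the limit of a diagram of ω-categories. -/
abbrev LimCell (G : J ⥤ OmegaCat.{u}) : Type u :=
  { q : ℕ × (∀ j : J, (G.obj j).Cell) //
    (∀ j, (G.obj j).dim (q.2 j) = q.1) ∧
    ∀ ⦃j j'⦄ (φ : j ⟶ j'), OmegaFunctor.map (G.map φ) (q.2 j) = q.2 j' }

variable (G : J ⥤ OmegaCat.{u})

theorem LimCell.ext' {a b : LimCell G} (h1 : a.1.1 = b.1.1)
    (h2 : ∀ j, a.1.2 j = b.1.2 j) : a = b :=
  Subtype.ext (Prod.ext h1 (funext h2))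

def limCond (p : ℕ) (a b : LimCell G) : Prop :=
  p < a.1.1 ∧ b.1.1 = a.1.1 ∧ ∀ j, (G.obj j).Composable p (a.1.2 j) (b.1.2 j)

open Classical in
def limComp (p : ℕ) (a b : LimCell G) : LimCell G :=
  if h : limCond G p a b then
    ⟨⟨a.1.1, fun j => (G.obj j).comp p (a.1.2 j) (b.1.2 j)⟩,
      fun j => by rw [(G.obj j).dim_comp p _ _ (h.2.2 j), a.2.1 j],
      fun j j' φ => by
        rw [OmegaFunctor.map_comp (G.map φ) p _ _ (h.2.2 j), a.2.2 φ, b.2.2 φ]⟩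
  else a

abbrev limPre : PreOmegaCat.{u} where
  Cell := LimCell G
  dim q := q.1.1
  src q := ⟨⟨q.1.1 - 1, fun j => (G.obj j).src (q.1.2 j)⟩,
    fun j => by rw [dim_src', q.2.1 j],
    fun j j' φ => by rw [OmegaFunctor.map_src (G.map φ), q.2.2 φ]⟩
  tgt q := ⟨⟨q.1.1 - 1, fun j => (G.obj j).tgt (q.1.2 j)⟩,
    fun j => by rw [dim_tgt', q.2.1 j],
    fun j j' φ => by rw [OmegaFunctor.map_tgt (G.map φ), q.2.2 φ]⟩
  comp := limComp G
  unit q := ⟨⟨q.1.1 + 1, fun j => (G.obj j).unit (q.1.2 j)⟩,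
    fun j => by rw [(G.obj j).dim_unit, q.2.1 j],
    fun j j' φ => by rw [OmegaFunctor.map_unit (G.map φ), q.2.2 φ]⟩

theorem lim_dim (q : LimCell G) : (limPre G).dim q = q.1.1 := rfl

theorem lim_src_fst (q : LimCell G) : ((limPre G).src q).1.1 = q.1.1 - 1 := rfl

theorem lim_src_snd (q : LimCell G) (j : J) :
    ((limPre G).src q).1.2 j = (G.obj j).src (q.1.2 j) := rfl

theorem lim_tgt_fst (q : LimCell G) : ((limPre G).tgt q).1.1 = q.1.1 - 1 := rfl

theorem lim_tgt_snd (q : LimCell G) (j : J) :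
    ((limPre G).tgt q).1.2 j = (G.obj j).tgt (q.1.2 j) := rfl

theorem lim_unit_fst (q : LimCell G) : ((limPre G).unit q).1.1 = q.1.1 + 1 := rfl

theorem lim_unit_snd (q : LimCell G) (j : J) :
    ((limPre G).unit q).1.2 j = (G.obj j).unit (q.1.2 j) := rfl

theorem lim_iter_src (k : ℕ) (q : LimCell G) :
    ((limPre G).src^[k] q).1.1 = q.1.1 - k ∧
    ∀ j, ((limPre G).src^[k] q).1.2 j = (G.obj j).src^[k] (q.1.2 j) := by
  induction k with
  | zero => exact ⟨by simp, fun j => rfl⟩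
  | succ k ih =>
      constructor
      · rw [Function.iterate_succ_apply', lim_src_fst, ih.1]
        omega
      · intro j
        rw [Function.iterate_succ_apply', lim_src_snd, ih.2 j]
        exact iterSucc' _ rfl _

theorem lim_iter_tgt (k : ℕ) (q : LimCell G) :
    ((limPre G).tgt^[k] q).1.1 = q.1.1 - k ∧
    ∀ j, ((limPre G).tgt^[k] q).1.2 j = (G.obj j).tgt^[k] (q.1.2 j) := by
  induction k with
  | zero => exact ⟨by simp, fun j => rfl⟩
  | succ k ih =>
      constructor
      · rw [Function.iterate_succ_apply', lim_tgt_fst, ih.1]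
        omega
      · intro j
        rw [Function.iterate_succ_apply', lim_tgt_snd, ih.2 j]
        exact iterSucc' _ rfl _

theorem lim_iter_unit (k : ℕ) (q : LimCell G) :
    ((limPre G).unit^[k] q).1.1 = q.1.1 + k ∧
    ∀ j, ((limPre G).unit^[k] q).1.2 j = (G.obj j).unit^[k] (q.1.2 j) := by
  induction k with
  | zero => exact ⟨by simp, fun j => rfl⟩
  | succ k ih =>
      constructor
      · rw [Function.iterate_succ_apply', lim_unit_fst, ih.1]
        omega
      · intro j
        rw [Function.iterate_succ_apply', lim_unit_snd, ih.2 j]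
        exact iterSucc' _ rfl _

theorem lim_srcI_fst (p : ℕ) (q : LimCell G) :
    ((limPre G).srcI p q).1.1 = q.1.1 - (q.1.1 - p) := by
  simp only [PreOmegaCat.srcI, lim_dim]
  exact (lim_iter_src G (q.1.1 - p) q).1

theorem lim_srcI_snd (p : ℕ) (q : LimCell G) (j : J) :
    ((limPre G).srcI p q).1.2 j = (G.obj j).srcI p (q.1.2 j) := by
  simp only [PreOmegaCat.srcI, lim_dim]
  rw [(lim_iter_src G (q.1.1 - p) q).2 j]
  exact iterCongr _ (by rw [q.2.1 j]) _

theorem lim_tgtI_fst (p : ℕ) (q : LimCell G) :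
    ((limPre G).tgtI p q).1.1 = q.1.1 - (q.1.1 - p) := by
  simp only [PreOmegaCat.tgtI, lim_dim]
  exact (lim_iter_tgt G (q.1.1 - p) q).1

theorem lim_tgtI_snd (p : ℕ) (q : LimCell G) (j : J) :
    ((limPre G).tgtI p q).1.2 j = (G.obj j).tgtI p (q.1.2 j) := by
  simp only [PreOmegaCat.tgtI, lim_dim]
  rw [(lim_iter_tgt G (q.1.1 - p) q).2 j]
  exact iterCongr _ (by rw [q.2.1 j]) _

theorem lim_composable {p : ℕ} {a b : LimCell G} :
    (limPre G).Composable p a b ↔ limCond G p a b := by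
  constructor
  · rintro ⟨h1, h2, h3⟩
    refine ⟨h1, h2, fun j => ⟨?_, ?_, ?_⟩⟩
    · rw [a.2.1 j]; exact h1
    · rw [a.2.1 j, b.2.1 j]; exact h2
    · have h4 := congrArg (fun z : LimCell G => z.1.2 j) h3
      beta_reduce at h4
      rwa [lim_srcI_snd, lim_tgtI_snd] at h4
  · rintro ⟨h1, h2, h3⟩
    refine ⟨h1, h2, ?_⟩
    apply LimCell.ext' G
    · rw [lim_srcI_fst, lim_tgtI_fst]
      omega
    · intro j
      rw [lim_srcI_snd, lim_tgtI_snd]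
      exact (h3 j).2.2

theorem limComp_pos {p : ℕ} {a b : LimCell G} (h : limCond G p a b) :
    ((limPre G).comp p a b).1.1 = a.1.1 ∧
    ∀ j, ((limPre G).comp p a b).1.2 j = (G.obj j).comp p (a.1.2 j) (b.1.2 j) := by
  constructor
  · show (limComp G p a b).1.1 = a.1.1
    rw [limComp, dif_pos h]
  · intro j
    show (limComp G p a b).1.2 j = _
    rw [limComp, dif_pos h]

end LimitOmega

section LimitOmegaB

open CategoryTheory

variable {J : Type u} [Category.{u} J] (G : J ⥤ OmegaCat.{u})

/-- The limit ω-category of a diagram of ω-categories. -/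
def limOmega : OmegaCat.{u} where
  toPreOmegaCat := limPre G
  dim_src x _ := rfl
  dim_tgt x _ := rfl
  src_dim0 x h := by
    have h' : x.1.1 = 0 := h
    exact LimCell.ext' G (by rw [lim_src_fst]; omega)
      (fun j => (G.obj j).src_dim0 _ (by rw [x.2.1 j]; exact h'))
  tgt_dim0 x h := by
    have h' : x.1.1 = 0 := h
    exact LimCell.ext' G (by rw [lim_tgt_fst]; omega)
      (fun j => (G.obj j).tgt_dim0 _ (by rw [x.2.1 j]; exact h'))
  glob_ss x h := LimCell.ext' G rfl
    (fun j => (G.obj j).glob_ss _ (by rw [x.2.1 j]; exact h))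
  glob_tt x h := LimCell.ext' G rfl
    (fun j => (G.obj j).glob_tt _ (by rw [x.2.1 j]; exact h))
  dim_unit x := rfl
  src_unit x := LimCell.ext' G (by rw [lim_src_fst, lim_unit_fst]; omega)
    (fun j => (G.obj j).src_unit _)
  tgt_unit x := LimCell.ext' G (by rw [lim_tgt_fst, lim_unit_fst]; omega)
    (fun j => (G.obj j).tgt_unit _)
  dim_comp p x y h := (limComp_pos G ((lim_composable G).1 h)).1
  src_comp_top p x y h htop := by
    have hc := (lim_composable G).1 h
    have htop' : x.1.1 = p + 1 := htop
    apply LimCell.ext' G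
    · rw [lim_src_fst, lim_src_fst, (limComp_pos G hc).1, hc.2.1]
    · intro j
      rw [lim_src_snd, lim_src_snd, (limComp_pos G hc).2 j,
        (G.obj j).src_comp_top p _ _ (hc.2.2 j) (by rw [x.2.1 j]; exact htop')]
  tgt_comp_top p x y h htop := by
    have hc := (lim_composable G).1 h
    have htop' : x.1.1 = p + 1 := htop
    apply LimCell.ext' G
    · rw [lim_tgt_fst, lim_tgt_fst, (limComp_pos G hc).1]
    · intro j
      rw [lim_tgt_snd, lim_tgt_snd, (limComp_pos G hc).2 j,
        (G.obj j).tgt_comp_top p _ _ (hc.2.2 j) (by rw [x.2.1 j]; exact htop')]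
  src_comp p x y h hlt := by
    have hc := (lim_composable G).1 h
    have hlt' : p + 1 < x.1.1 := hlt
    have hcond : limCond G p ((limPre G).src x) ((limPre G).src y) := by
      refine ⟨by rw [lim_src_fst]; omega,
        by rw [lim_src_fst, lim_src_fst, hc.2.1], fun j => ?_⟩
      rw [lim_src_snd, lim_src_snd]
      exact composable_src (G.obj j) (hc.2.2 j) (by rw [x.2.1 j]; exact hlt')
    apply LimCell.ext' G
    · rw [lim_src_fst, (limComp_pos G hc).1, (limComp_pos G hcond).1, lim_src_fst]
    · intro j
      rw [lim_src_snd, (limComp_pos G hc).2 j, (limComp_pos G hcond).2 j,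
        lim_src_snd, lim_src_snd]
      exact (G.obj j).src_comp p _ _ (hc.2.2 j) (by rw [x.2.1 j]; exact hlt')
  tgt_comp p x y h hlt := by
    have hc := (lim_composable G).1 h
    have hlt' : p + 1 < x.1.1 := hlt
    have hcond : limCond G p ((limPre G).tgt x) ((limPre G).tgt y) := by
      refine ⟨by rw [lim_tgt_fst]; omega,
        by rw [lim_tgt_fst, lim_tgt_fst, hc.2.1], fun j => ?_⟩
      rw [lim_tgt_snd, lim_tgt_snd]
      exact composable_tgt (G.obj j) (hc.2.2 j) (by rw [x.2.1 j]; exact hlt')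
    apply LimCell.ext' G
    · rw [lim_tgt_fst, (limComp_pos G hc).1, (limComp_pos G hcond).1, lim_tgt_fst]
    · intro j
      rw [lim_tgt_snd, (limComp_pos G hc).2 j, (limComp_pos G hcond).2 j,
        lim_tgt_snd, lim_tgt_snd]
      exact (G.obj j).tgt_comp p _ _ (hc.2.2 j) (by rw [x.2.1 j]; exact hlt')
  comp_assoc p x y z h1 h2 := by
    have hc1 := (lim_composable G).1 h1
    have hc2 := (lim_composable G).1 h2
    have hcL : limCond G p ((limPre G).comp p x y) z := by
      refine ⟨by rw [(limComp_pos G hc1).1]; exact hc1.1,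
        by rw [(limComp_pos G hc1).1]; exact hc2.2.1.trans hc1.2.1, fun j => ?_⟩
      rw [(limComp_pos G hc1).2 j]
      refine ⟨?_, ?_, ?_⟩
      · rw [(G.obj j).dim_comp p _ _ (hc1.2.2 j)]
        exact (hc1.2.2 j).1
      · rw [(G.obj j).dim_comp p _ _ (hc1.2.2 j), (hc2.2.2 j).2.1, (hc1.2.2 j).2.1]
      · rw [srcI_comp_low (G.obj j) (hc1.2.2 j) le_rfl]
        exact (hc2.2.2 j).2.2
    have hcR : limCond G p x ((limPre G).comp p y z) := by
      refine ⟨hc1.1, by rw [(limComp_pos G hc2).1]; exact hc1.2.1, fun j => ?_⟩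
      rw [(limComp_pos G hc2).2 j]
      refine ⟨(hc1.2.2 j).1, ?_, ?_⟩
      · rw [(G.obj j).dim_comp p _ _ (hc2.2.2 j)]
        exact (hc1.2.2 j).2.1
      · rw [tgtI_comp_low (G.obj j) (hc2.2.2 j) le_rfl]
        exact (hc1.2.2 j).2.2
    apply LimCell.ext' G
    · rw [(limComp_pos G hcL).1, (limComp_pos G hc1).1, (limComp_pos G hcR).1]
    · intro j
      rw [(limComp_pos G hcL).2 j, (limComp_pos G hcR).2 j, (limComp_pos G hc1).2 j,
        (limComp_pos G hc2).2 j]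
      exact (G.obj j).comp_assoc p _ _ _ (hc1.2.2 j) (hc2.2.2 j)
  comp_unit_src p x h := by
    have h' : p < x.1.1 := h
    have hwf : ((limPre G).unit^[x.1.1 - p] ((limPre G).srcI p x)).1.1 =
        (x.1.1 - (x.1.1 - p)) + (x.1.1 - p) := by
      rw [(lim_iter_unit G _ _).1, lim_srcI_fst]
    have hws : ∀ j, ((limPre G).unit^[x.1.1 - p] ((limPre G).srcI p x)).1.2 j =
        (G.obj j).unit^[x.1.1 - p] ((G.obj j).srcI p (x.1.2 j)) := fun j => by
      rw [(lim_iter_unit G _ _).2 j, lim_srcI_snd]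
    have hcond : limCond G p x ((limPre G).unit^[x.1.1 - p] ((limPre G).srcI p x)) := by
      refine ⟨h', by rw [hwf]; omega, fun j => ?_⟩
      rw [hws j]
      refine ⟨by rw [x.2.1 j]; exact h', ?_, ?_⟩
      · rw [dim_unitIter, dim_srcI (G.obj j) p _ (by rw [x.2.1 j]; omega), x.2.1 j]
        omega
      · rw [tgtI_unitIter_high (G.obj j) _
          (dim_srcI (G.obj j) p _ (by rw [x.2.1 j]; omega)).le
          (by rw [dim_srcI (G.obj j) p _ (by rw [x.2.1 j]; omega)]; omega),
          dim_srcI (G.obj j) p _ (by rw [x.2.1 j]; omega),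
          show p - p = 0 by omega, Function.iterate_zero_apply]
    show (limPre G).comp p x ((limPre G).unit^[x.1.1 - p] ((limPre G).srcI p x)) = x
    apply LimCell.ext' G
    · rw [(limComp_pos G hcond).1]
    · intro j
      rw [(limComp_pos G hcond).2 j, hws j]
      have hax := (G.obj j).comp_unit_src p (x.1.2 j) (by rw [x.2.1 j]; exact h')
      rw [x.2.1 j] at hax
      exact hax
  comp_unit_tgt p x h := by
    have h' : p < x.1.1 := h
    have hwf : ((limPre G).unit^[x.1.1 - p] ((limPre G).tgtI p x)).1.1 =
        (x.1.1 - (x.1.1 - p)) + (x.1.1 - p) := by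
      rw [(lim_iter_unit G _ _).1, lim_tgtI_fst]
    have hws : ∀ j, ((limPre G).unit^[x.1.1 - p] ((limPre G).tgtI p x)).1.2 j =
        (G.obj j).unit^[x.1.1 - p] ((G.obj j).tgtI p (x.1.2 j)) := fun j => by
      rw [(lim_iter_unit G _ _).2 j, lim_tgtI_snd]
    have hcond : limCond G p ((limPre G).unit^[x.1.1 - p] ((limPre G).tgtI p x)) x := by
      refine ⟨by rw [hwf]; omega, by rw [hwf]; omega, fun j => ?_⟩
      rw [hws j]
      refine ⟨?_, ?_, ?_⟩
      · rw [dim_unitIter, dim_tgtI (G.obj j) p _ (by rw [x.2.1 j]; omega)]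
        omega
      · rw [dim_unitIter, dim_tgtI (G.obj j) p _ (by rw [x.2.1 j]; omega), x.2.1 j]
        omega
      · rw [srcI_unitIter_high (G.obj j) _
          (dim_tgtI (G.obj j) p _ (by rw [x.2.1 j]; omega)).le
          (by rw [dim_tgtI (G.obj j) p _ (by rw [x.2.1 j]; omega)]; omega),
          dim_tgtI (G.obj j) p _ (by rw [x.2.1 j]; omega),
          show p - p = 0 by omega, Function.iterate_zero_apply]
    show (limPre G).comp p ((limPre G).unit^[x.1.1 - p] ((limPre G).tgtI p x)) x = x
    apply LimCell.ext' G
    · rw [(limComp_pos G hcond).1, hwf]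
      omega
    · intro j
      rw [(limComp_pos G hcond).2 j, hws j]
      have hax := (G.obj j).comp_unit_tgt p (x.1.2 j) (by rw [x.2.1 j]; exact h')
      rw [x.2.1 j] at hax
      exact hax
  interchange p q x y x' y' hqp h1 h2 h3 h4 := by
    have hc1 := (lim_composable G).1 h1
    have hc2 := (lim_composable G).1 h2
    have hc3 := (lim_composable G).1 h3
    have hc4 := (lim_composable G).1 h4
    have hsy : ∀ j, (G.obj j).srcI q (y.1.2 j) = (G.obj j).srcI q (x.1.2 j) := fun j =>
      calc (G.obj j).srcI q (y.1.2 j)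
          = (G.obj j).srcI q ((G.obj j).tgtI p (y.1.2 j)) :=
            (srcI_tgtI (G.obj j) _ hqp).symm
        _ = (G.obj j).srcI q ((G.obj j).srcI p (x.1.2 j)) := by rw [(hc1.2.2 j).2.2]
        _ = (G.obj j).srcI q (x.1.2 j) := srcI_srcI (G.obj j) _ hqp.le
    have hcondL : limCond G q ((limPre G).comp p x y) ((limPre G).comp p x' y') := by
      refine ⟨by rw [(limComp_pos G hc1).1]; exact lt_trans hqp hc1.1,
        by rw [(limComp_pos G hc1).1, (limComp_pos G hc2).1]; exact hc3.2.1, fun j => ?_⟩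
      rw [(limComp_pos G hc1).2 j, (limComp_pos G hc2).2 j]
      refine ⟨?_, ?_, ?_⟩
      · rw [(G.obj j).dim_comp p _ _ (hc1.2.2 j)]
        exact lt_trans hqp (hc1.2.2 j).1
      · rw [(G.obj j).dim_comp p _ _ (hc1.2.2 j), (G.obj j).dim_comp p _ _ (hc2.2.2 j)]
        exact (hc3.2.2 j).2.1
      · rw [srcI_comp_low (G.obj j) (hc1.2.2 j) hqp.le,
          tgtI_comp_low (G.obj j) (hc2.2.2 j) hqp.le, hsy j]
        exact (hc3.2.2 j).2.2
    have hcondR : limCond G p ((limPre G).comp q x x') ((limPre G).comp q y y') := by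
      refine ⟨by rw [(limComp_pos G hc3).1]; exact hc1.1,
        by rw [(limComp_pos G hc3).1, (limComp_pos G hc4).1]; exact hc1.2.1, fun j => ?_⟩
      rw [(limComp_pos G hc3).2 j, (limComp_pos G hc4).2 j]
      refine ⟨?_, ?_, ?_⟩
      · rw [(G.obj j).dim_comp q _ _ (hc3.2.2 j)]
        exact (hc1.2.2 j).1
      · rw [(G.obj j).dim_comp q _ _ (hc3.2.2 j), (G.obj j).dim_comp q _ _ (hc4.2.2 j)]
        exact (hc1.2.2 j).2.1
      · rw [(srcI_comp_high (G.obj j) (hc3.2.2 j) hqp (le_of_lt (hc1.2.2 j).1)).1,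
          (tgtI_comp_high (G.obj j) (hc4.2.2 j) hqp
            (by rw [(hc1.2.2 j).2.1]; exact (le_of_lt (hc1.2.2 j).1))).1,
          (hc1.2.2 j).2.2, (hc2.2.2 j).2.2]
    apply LimCell.ext' G
    · rw [(limComp_pos G hcondL).1, (limComp_pos G hc1).1, (limComp_pos G hcondR).1,
        (limComp_pos G hc3).1]
    · intro j
      rw [(limComp_pos G hcondL).2 j, (limComp_pos G hcondR).2 j, (limComp_pos G hc1).2 j,
        (limComp_pos G hc2).2 j, (limComp_pos G hc3).2 j, (limComp_pos G hc4).2 j]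
      exact (G.obj j).interchange p q _ _ _ _ hqp (hc1.2.2 j) (hc2.2.2 j) (hc3.2.2 j)
        (hc4.2.2 j)
  unit_comp p x y h := by
    have hc := (lim_composable G).1 h
    have hcond : limCond G p ((limPre G).unit x) ((limPre G).unit y) := by
      refine ⟨Nat.lt_succ_of_lt hc.1, by rw [lim_unit_fst, lim_unit_fst, hc.2.1],
        fun j => ?_⟩
      rw [lim_unit_snd, lim_unit_snd]
      refine ⟨?_, ?_, ?_⟩
      · rw [(G.obj j).dim_unit]
        exact Nat.lt_succ_of_lt (hc.2.2 j).1
      · rw [(G.obj j).dim_unit, (G.obj j).dim_unit, (hc.2.2 j).2.1]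
      · rw [srcI_unit (G.obj j) _ (le_of_lt (hc.2.2 j).1),
          tgtI_unit (G.obj j) _ (by rw [(hc.2.2 j).2.1]; exact (le_of_lt (hc.2.2 j).1))]
        exact (hc.2.2 j).2.2
    apply LimCell.ext' G
    · rw [lim_unit_fst, (limComp_pos G hc).1, (limComp_pos G hcond).1, lim_unit_fst]
    · intro j
      rw [lim_unit_snd, (limComp_pos G hc).2 j, (limComp_pos G hcond).2 j,
        lim_unit_snd, lim_unit_snd]
      exact (G.obj j).unit_comp p _ _ (hc.2.2 j)

end LimitOmegaB

section LimitCone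

open CategoryTheory CategoryTheory.Limits

variable {J : Type u} [Category.{u} J] (G : J ⥤ OmegaCat.{u})

/-- Projection ω-functor from the limit. -/
def limPr (j : J) : OmegaFunctor (limOmega G) (G.obj j) where
  map q := q.1.2 j
  map_dim q := q.2.1 j
  map_src _ := rfl
  map_tgt _ := rfl
  map_unit _ := rfl
  map_comp p a b h := (limComp_pos G ((lim_composable G).1 h)).2 j

def limCone : Cone G where
  pt := limOmega G
  π :=
    { app := fun j => limPr G j
      naturality := fun j j' φ => by
        apply OmegaFunctor.ext
        funext q
        exact (q.2.2 φ).symm }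

def limLiftCell (c : Cone G) (e : c.pt.Cell) : LimCell G :=
  ⟨⟨c.pt.dim e, fun j => OmegaFunctor.map (c.π.app j) e⟩,
    fun j => OmegaFunctor.map_dim (c.π.app j) e,
    fun j j' φ => by
      have := congrFun (congrArg OmegaFunctor.map (c.w φ)) e
      exact this⟩

def limLift (c : Cone G) : OmegaFunctor c.pt (limOmega G) where
  map e := limLiftCell G c e
  map_dim _ := rfl
  map_src e := LimCell.ext' G (dim_src' c.pt e)
    (fun j => OmegaFunctor.map_src (c.π.app j) e)
  map_tgt e := LimCell.ext' G (dim_tgt' c.pt e)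
    (fun j => OmegaFunctor.map_tgt (c.π.app j) e)
  map_unit e := LimCell.ext' G (c.pt.dim_unit e)
    (fun j => OmegaFunctor.map_unit (c.π.app j) e)
  map_comp p a b h := by
    have hcond : limCond G p (limLiftCell G c a) (limLiftCell G c b) :=
      ⟨h.1, h.2.1, fun j => OmegaFunctor.map_composable (c.π.app j) h⟩
    show limLiftCell G c (c.pt.comp p a b) =
      (limPre G).comp p (limLiftCell G c a) (limLiftCell G c b)
    apply LimCell.ext' G
    · rw [(limComp_pos G hcond).1]
      exact c.pt.dim_comp p a b h
    · intro j
      rw [(limComp_pos G hcond).2 j]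
      exact OmegaFunctor.map_comp (c.π.app j) p a b h

def limIsLimit : IsLimit (limCone G) where
  lift c := limLift G c
  fac c j := OmegaFunctor.ext rfl
  uniq c m hm := by
    apply OmegaFunctor.ext
    funext e
    apply LimCell.ext' G
    · exact OmegaFunctor.map_dim m e
    · intro j
      exact congrFun (congrArg OmegaFunctor.map (hm j)) e

end LimitCone

section LimitExpansion

open CategoryTheory CategoryTheory.Limits

variable {J : Type u} [Category.{u} J]

theorem lim_pad_fst (G : J ⥤ OmegaCat.{u}) (m : ℕ) (q : LimCell G) :
    ((limPre G).pad m q).1.1 = q.1.1 + (m - q.1.1) := by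
  simp only [PreOmegaCat.pad, lim_dim]
  exact (lim_iter_unit G _ q).1

theorem lim_pad_snd (G : J ⥤ OmegaCat.{u}) (m : ℕ) (q : LimCell G) (j : J) :
    ((limPre G).pad m q).1.2 j = (G.obj j).pad m (q.1.2 j) := by
  simp only [PreOmegaCat.pad, lim_dim]
  rw [(lim_iter_unit G _ q).2 j]
  exact iterCongr _ (by rw [q.2.1 j]) _

variable (F : J ⥤ ExpCatObj.{u})

/-- The ω-categorical diagram underlying a diagram with expansions. -/
def eG : J ⥤ OmegaCat.{u} := F ⋙ forgetExp.{u}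

def limOrig : LimCell (eG F) :=
  ⟨⟨0, fun j => (F.obj j).exp.orig⟩, fun j => (F.obj j).exp.dim_orig,
    fun j j' φ => (F.map φ).map_orig⟩

def limXi (q : LimCell (eG F)) : LimCell (eG F) :=
  ⟨⟨q.1.1 + 1, fun j => (F.obj j).exp.xi (q.1.2 j)⟩,
    fun j => by
      have h1 := (F.obj j).exp.dim_xi (q.1.2 j)
      have h2 : (F.obj j).cat.dim (q.1.2 j) = q.1.1 := q.2.1 j
      exact h1.trans (by rw [h2]),
    fun j j' φ => by
      have h2 : (F.map φ).func.map (q.1.2 j) = q.1.2 j' := q.2.2 φ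
      have h1 := (F.map φ).map_xi (q.1.2 j)
      exact h1.trans (congrArg (F.obj j').exp.xi h2)⟩

theorem limXi_fst (q : LimCell (eG F)) : (limXi F q).1.1 = q.1.1 + 1 := rfl

theorem limXi_snd (q : LimCell (eG F)) (j : J) :
    (limXi F q).1.2 j = (F.obj j).exp.xi (q.1.2 j) := rfl

theorem lim_fold (b x : LimCell (eG F)) (K : ℕ) (hK : K ≤ b.1.1)
    (hbx : ∀ i j, i < K →
      ((eG F).obj j).srcI i (b.1.2 j) = ((eG F).obj j).srcI i (x.1.2 j)) :
    ∀ k, k ≤ K →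
      ((limPre (eG F)).foldComp b (fun i => limXi F ((limPre (eG F)).srcI i x)) k).1.1
        = b.1.1 ∧
      ∀ j, ((limPre (eG F)).foldComp b
            (fun i => limXi F ((limPre (eG F)).srcI i x)) k).1.2 j =
        ((eG F).obj j).foldComp (b.1.2 j)
          (fun i => (F.obj j).exp.xi (((eG F).obj j).srcI i (x.1.2 j))) k := by
  intro k
  induction k with
  | zero => exact fun _ => ⟨rfl, fun j => rfl⟩
  | succ k ih =>
      intro hk1
      obtain ⟨ihf, ihs⟩ := ih (by omega)
      have hSf : (limXi F ((limPre (eG F)).srcI k x)).1.1 = (x.1.1 - (x.1.1 - k)) + 1 := by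
        rw [limXi_fst, lim_srcI_fst]
      have hfoldstep : (limPre (eG F)).foldComp b
            (fun i => limXi F ((limPre (eG F)).srcI i x)) (k+1) =
          (limPre (eG F)).comp k
            ((limPre (eG F)).pad b.1.1
              ((limPre (eG F)).foldComp b (fun i => limXi F ((limPre (eG F)).srcI i x)) k))
            ((limPre (eG F)).pad b.1.1 (limXi F ((limPre (eG F)).srcI k x))) := by
        simp only [PreOmegaCat.foldComp, PreOmegaCat.mcomp, lim_dim]
        rw [ihf, hSf, show max b.1.1 (x.1.1 - (x.1.1 - k) + 1) = b.1.1 by omega]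
      have hpadf_fst : ((limPre (eG F)).pad b.1.1
          ((limPre (eG F)).foldComp b (fun i => limXi F ((limPre (eG F)).srcI i x)) k)).1.1
          = b.1.1 := by
        rw [lim_pad_fst, ihf]
        omega
      have hpadS_fst : ((limPre (eG F)).pad b.1.1
          (limXi F ((limPre (eG F)).srcI k x))).1.1 = b.1.1 := by
        rw [lim_pad_fst, hSf]
        omega
      have hdimxi : ∀ j, ((eG F).obj j).dim
          ((F.obj j).exp.xi (((eG F).obj j).srcI k (x.1.2 j))) = k + 1 := fun j =>
        dim_xs_of_eq ((eG F).obj j) (F.obj j).exp (x.1.2 j) (b.1.2 j) k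
          (by rw [b.2.1 j]; omega) (hbx k j (by omega))
      have hcond : limCond (eG F) k
          ((limPre (eG F)).pad b.1.1
            ((limPre (eG F)).foldComp b (fun i => limXi F ((limPre (eG F)).srcI i x)) k))
          ((limPre (eG F)).pad b.1.1 (limXi F ((limPre (eG F)).srcI k x))) := by
        refine ⟨by rw [hpadf_fst]; omega, by rw [hpadS_fst, hpadf_fst], fun j => ?_⟩
        rw [lim_pad_snd, lim_pad_snd, ihs j, limXi_snd, lim_srcI_snd,
          pad_of_le ((eG F).obj j) _ (le_of_eq (by
            rw [(chain ((eG F).obj j) (F.obj j).exp (x.1.2 j) k (b.1.2 j)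
              (by rw [b.2.1 j]; omega) (fun i hi => hbx i j (by omega))).1, b.2.1 j]))]
        unfold PreOmegaCat.pad
        rw [hdimxi j]
        have hD := (chain ((eG F).obj j) (F.obj j).exp (x.1.2 j) k (b.1.2 j)
          (by rw [b.2.1 j]; omega) (fun i hi => hbx i j (by omega))).2.2.2
          (by rw [b.2.1 j]; omega) (hbx k j (by omega))
        rw [b.2.1 j] at hD
        exact hD
      refine ⟨?_, ?_⟩
      · rw [hfoldstep, (limComp_pos _ hcond).1, hpadf_fst]
      · intro j
        rw [hfoldstep, (limComp_pos _ hcond).2 j, lim_pad_snd, lim_pad_snd, ihs j,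
          limXi_snd, lim_srcI_snd]
        simp only [PreOmegaCat.foldComp, PreOmegaCat.mcomp]
        rw [(chain ((eG F).obj j) (F.obj j).exp (x.1.2 j) k (b.1.2 j)
            (by rw [b.2.1 j]; omega) (fun i hi => hbx i j (by omega))).1, b.2.1 j,
          hdimxi j, show max b.1.1 (k+1) = b.1.1 by omega]

end LimitExpansion

section LimitExp2

open CategoryTheory CategoryTheory.Limits

variable {J : Type u} [Category.{u} J] (F : J ⥤ ExpCatObj.{u})

theorem limOrig_fst : (limOrig F).1.1 = 0 := rfl

theorem limOrig_snd (j : J) : (limOrig F).1.2 j = (F.obj j).exp.orig := rfl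

theorem limExp_xi_src0 (q : LimCell (eG F)) (h : q.1.1 = 0) :
    (limPre (eG F)).src (limXi F q) = limOrig F := by
  apply LimCell.ext' (eG F)
  · rw [lim_src_fst, limXi_fst, limOrig_fst]
    omega
  · intro j
    rw [lim_src_snd, limXi_snd, limOrig_snd]
    exact (F.obj j).exp.xi_src0 (q.1.2 j) ((q.2.1 j).trans h)

theorem limExp_xi_src (q : LimCell (eG F)) (h : ¬ q.1.1 = 0) :
    (limPre (eG F)).src (limXi F q) = limXi F ((limPre (eG F)).tgt q) := by
  apply LimCell.ext' (eG F)
  · rw [lim_src_fst, limXi_fst, limXi_fst, lim_tgt_fst]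
    omega
  · intro j
    rw [lim_src_snd, limXi_snd, limXi_snd, lim_tgt_snd]
    exact (F.obj j).exp.xi_src (q.1.2 j) (fun h0 => h (((q.2.1 j).symm).trans h0))

theorem limExp_xi_tgt (q : LimCell (eG F)) :
    (limPre (eG F)).tgt (limXi F q) =
      (limPre (eG F)).foldComp q (fun i => limXi F ((limPre (eG F)).srcI i q))
        ((limPre (eG F)).dim q) := by
  obtain ⟨hf, hs⟩ := lim_fold F q q q.1.1 le_rfl (fun i j _ => rfl) q.1.1 le_rfl
  rw [lim_dim]
  apply LimCell.ext' (eG F)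
  · rw [lim_tgt_fst, limXi_fst, hf]
    omega
  · intro j
    rw [hs j, lim_tgt_snd, limXi_snd]
    have hax := (F.obj j).exp.xi_tgt (q.1.2 j)
    have hd : (F.obj j).cat.dim (q.1.2 j) = q.1.1 := q.2.1 j
    rw [hd] at hax
    exact hax

theorem limExp_xi_unit (q : LimCell (eG F)) :
    limXi F ((limPre (eG F)).unit q) = (limPre (eG F)).unit (limXi F q) :=
  LimCell.ext' (eG F) rfl (fun j => (F.obj j).exp.xi_unit (q.1.2 j))

theorem limExp_xi_xi (q : LimCell (eG F)) :
    limXi F (limXi F q) = (limPre (eG F)).unit (limXi F q) :=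
  LimCell.ext' (eG F) rfl (fun j => (F.obj j).exp.xi_xi (q.1.2 j))

theorem limExp_xi_orig :
    limXi F (limOrig F) = (limPre (eG F)).unit (limOrig F) :=
  LimCell.ext' (eG F) rfl (fun j => (F.obj j).exp.xi_orig)

theorem limExp_xi_comp (p : ℕ) (x y : LimCell (eG F))
    (h : (limPre (eG F)).Composable p y x) :
    limXi F ((limPre (eG F)).comp p y x) =
      (limPre (eG F)).mcomp (p+1)
        ((limPre (eG F)).mcomp p
          ((limPre (eG F)).foldComp ((limPre (eG F)).tgtI (p+1) y)
            (fun i => limXi F ((limPre (eG F)).srcI i x)) p)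
          (limXi F x))
        (limXi F y) := by
  have hc := (lim_composable (eG F)).1 h
  have hp : p < y.1.1 := hc.1
  have hxy : x.1.1 = y.1.1 := hc.2.1
  have hcj : ∀ j, ((eG F).obj j).Composable p (y.1.2 j) (x.1.2 j) := hc.2.2
  have facts := fun j =>
    xiCompFacts ((eG F).obj j) (F.obj j).exp p (x.1.2 j) (y.1.2 j) (hcj j)
  have hdyj : ∀ j, ((eG F).obj j).dim (y.1.2 j) = y.1.1 := fun j => y.2.1 j
  have hbf : ((limPre (eG F)).tgtI (p+1) y).1.1 = p + 1 := by
    rw [lim_tgtI_fst]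
    omega
  have hbx : ∀ i j, i < p →
      ((eG F).obj j).srcI i (((limPre (eG F)).tgtI (p+1) y).1.2 j) =
        ((eG F).obj j).srcI i (x.1.2 j) := fun i j hi => by
    rw [lim_tgtI_snd]
    exact xiComp_pre ((eG F).obj j) p (x.1.2 j) (y.1.2 j) (hcj j) i hi
  obtain ⟨hFf, hFs⟩ := lim_fold F ((limPre (eG F)).tgtI (p+1) y) x p (by rw [hbf]; omega) hbx
    p le_rfl
  have hFf' : ((limPre (eG F)).foldComp ((limPre (eG F)).tgtI (p+1) y)
      (fun i => limXi F ((limPre (eG F)).srcI i x)) p).1.1 = p + 1 := hFf.trans hbf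
  have hFs' : ∀ j, ((limPre (eG F)).foldComp ((limPre (eG F)).tgtI (p+1) y)
      (fun i => limXi F ((limPre (eG F)).srcI i x)) p).1.2 j =
      ((eG F).obj j).foldComp (((eG F).obj j).tgtI (p+1) (y.1.2 j))
        (fun i => (F.obj j).exp.xi (((eG F).obj j).srcI i (x.1.2 j))) p := fun j => by
    rw [hFs j, lim_tgtI_snd]
  have hXXf : (limXi F x).1.1 = y.1.1 + 1 := by rw [limXi_fst, hxy]
  have hMLeq : (limPre (eG F)).mcomp p
      ((limPre (eG F)).foldComp ((limPre (eG F)).tgtI (p+1) y)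
        (fun i => limXi F ((limPre (eG F)).srcI i x)) p) (limXi F x) =
      (limPre (eG F)).comp p
        ((limPre (eG F)).pad (y.1.1+1)
          ((limPre (eG F)).foldComp ((limPre (eG F)).tgtI (p+1) y)
            (fun i => limXi F ((limPre (eG F)).srcI i x)) p))
        ((limPre (eG F)).pad (y.1.1+1) (limXi F x)) := by
    simp only [PreOmegaCat.mcomp, lim_dim]
    rw [hFf', hXXf, show max (p+1) (y.1.1+1) = y.1.1+1 by omega]
  have hpadF_fst : ((limPre (eG F)).pad (y.1.1+1)
      ((limPre (eG F)).foldComp ((limPre (eG F)).tgtI (p+1) y)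
        (fun i => limXi F ((limPre (eG F)).srcI i x)) p)).1.1 = y.1.1+1 := by
    rw [lim_pad_fst, hFf']
    omega
  have hpadX_fst : ((limPre (eG F)).pad (y.1.1+1) (limXi F x)).1.1 = y.1.1+1 := by
    rw [lim_pad_fst, hXXf]
    omega
  have midL : limCond (eG F) p
      ((limPre (eG F)).pad (y.1.1+1)
        ((limPre (eG F)).foldComp ((limPre (eG F)).tgtI (p+1) y)
          (fun i => limXi F ((limPre (eG F)).srcI i x)) p))
      ((limPre (eG F)).pad (y.1.1+1) (limXi F x)) := by
    refine ⟨by rw [hpadF_fst]; omega, by rw [hpadX_fst, hpadF_fst], fun j => ?_⟩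
    rw [lim_pad_snd, lim_pad_snd, hFs' j, limXi_snd]
    have hm := (facts j).2.1
    rw [hdyj j] at hm
    exact hm
  have hMLf : ((limPre (eG F)).mcomp p
      ((limPre (eG F)).foldComp ((limPre (eG F)).tgtI (p+1) y)
        (fun i => limXi F ((limPre (eG F)).srcI i x)) p) (limXi F x)).1.1 = y.1.1 + 1 := by
    rw [hMLeq, (limComp_pos _ midL).1, hpadF_fst]
  have hMLs : ∀ j, ((limPre (eG F)).mcomp p
      ((limPre (eG F)).foldComp ((limPre (eG F)).tgtI (p+1) y)
        (fun i => limXi F ((limPre (eG F)).srcI i x)) p) (limXi F x)).1.2 j =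
      ((eG F).obj j).mcomp p
        (((eG F).obj j).foldComp (((eG F).obj j).tgtI (p+1) (y.1.2 j))
          (fun i => (F.obj j).exp.xi (((eG F).obj j).srcI i (x.1.2 j))) p)
        ((F.obj j).exp.xi (x.1.2 j)) := fun j => by
    rw [hMLeq, (limComp_pos _ midL).2 j, lim_pad_snd, lim_pad_snd, hFs' j, limXi_snd]
    have hmeq := (facts j).2.2.2.2.1
    rw [hdyj j] at hmeq
    exact hmeq.symm
  have hOUTeq : (limPre (eG F)).mcomp (p+1)
      ((limPre (eG F)).mcomp p
        ((limPre (eG F)).foldComp ((limPre (eG F)).tgtI (p+1) y)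
          (fun i => limXi F ((limPre (eG F)).srcI i x)) p) (limXi F x)) (limXi F y) =
      (limPre (eG F)).comp (p+1)
        ((limPre (eG F)).pad (y.1.1+1)
          ((limPre (eG F)).mcomp p
            ((limPre (eG F)).foldComp ((limPre (eG F)).tgtI (p+1) y)
              (fun i => limXi F ((limPre (eG F)).srcI i x)) p) (limXi F x)))
        ((limPre (eG F)).pad (y.1.1+1) (limXi F y)) := by
    conv_lhs => rw [PreOmegaCat.mcomp]
    rw [lim_dim, lim_dim, hMLf, limXi_fst, max_self]
  have houtcond : limCond (eG F) (p+1)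
      ((limPre (eG F)).pad (y.1.1+1)
        ((limPre (eG F)).mcomp p
          ((limPre (eG F)).foldComp ((limPre (eG F)).tgtI (p+1) y)
            (fun i => limXi F ((limPre (eG F)).srcI i x)) p) (limXi F x)))
      ((limPre (eG F)).pad (y.1.1+1) (limXi F y)) := by
    refine ⟨by rw [lim_pad_fst, hMLf]; omega,
      by rw [lim_pad_fst, lim_pad_fst, hMLf, limXi_fst], fun j => ?_⟩
    rw [lim_pad_snd, lim_pad_snd, hMLs j, limXi_snd]
    have ho := (facts j).2.2.2.1
    rw [hdyj j] at ho
    exact ho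
  rw [hOUTeq]
  apply LimCell.ext' (eG F)
  · rw [limXi_fst, (limComp_pos _ hc).1, (limComp_pos _ houtcond).1, lim_pad_fst, hMLf]
    omega
  · intro j
    rw [limXi_snd, (limComp_pos _ hc).2 j, (limComp_pos _ houtcond).2 j,
      lim_pad_snd, lim_pad_snd, hMLs j, limXi_snd]
    have hax := (F.obj j).exp.xi_comp p (x.1.2 j) (y.1.2 j) (hcj j)
    have hm2 := (facts j).2.2.2.2.2
    rw [hdyj j] at hm2
    exact hax.trans hm2

/-- The expansion on the limit ω-category. -/
def limExpansion : Expansion (limOmega (eG F)) where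
  orig := limOrig F
  dim_orig := rfl
  xi := limXi F
  dim_xi _ := rfl
  xi_src0 := limExp_xi_src0 F
  xi_src := limExp_xi_src F
  xi_tgt := limExp_xi_tgt F
  xi_comp := limExp_xi_comp F
  xi_unit := limExp_xi_unit F
  xi_xi := limExp_xi_xi F
  xi_orig := limExp_xi_orig F

def limExpObj : ExpCatObj.{u} := ⟨limOmega (eG F), limExpansion F⟩

def limExpPr (j : J) : ExpHom (limExpObj F) (F.obj j) where
  func := limPr (eG F) j
  map_orig := rfl
  map_xi _ := rfl

def expCone : Cone F where
  pt := limExpObj F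
  π :=
    { app := fun j => limExpPr F j
      naturality := fun j j' φ => by
        apply ExpHom.ext
        apply OmegaFunctor.ext
        funext q
        exact (q.2.2 φ).symm }

def expLift (c : Cone F) : ExpHom c.pt (limExpObj F) where
  func := limLift (eG F) (forgetExp.mapCone c)
  map_orig := LimCell.ext' (eG F) c.pt.exp.dim_orig
    (fun j => (c.π.app j).map_orig)
  map_xi q := LimCell.ext' (eG F) (c.pt.exp.dim_xi q)
    (fun j => (c.π.app j).map_xi q)

def expIsLimit : IsLimit (expCone F) where
  lift c := expLift F c
  fac c j := by
    apply ExpHom.ext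
    apply OmegaFunctor.ext
    rfl
  uniq c m hm := by
    apply ExpHom.ext
    apply OmegaFunctor.ext
    funext e
    apply LimCell.ext' (eG F)
    · exact OmegaFunctor.map_dim (ExpHom.func m) e
    · intro j
      exact congrFun (congrArg (fun g => OmegaFunctor.map (ExpHom.func g)) (hm j)) e

instance : HasLimitsOfSize.{u, u} ExpCatObj.{u} where
  has_limits_of_shape J _ :=
    { has_limit := fun F => HasLimit.mk ⟨expCone F, expIsLimit F⟩ }

noncomputable instance : PreservesLimitsOfSize.{u, u} forgetExp.{u} where
  preservesLimitsOfShape {J} _ :=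
    { preservesLimit := fun {F} =>
        preservesLimit_of_preserves_limit_cone (expIsLimit F)
          ((limIsLimit (eG F)).ofIsoLimit
            (Cones.ext (Iso.refl _) (fun j => by
              apply OmegaFunctor.ext
              rfl))) }

end LimitExp2

section SolutionSet

open CategoryTheory

/-- Terms over the cells of `C` in the signature of ω-categories with expansion. -/
inductive TT (C : OmegaCat.{u}) : Type u where
  | emb : C.Cell → TT C
  | org : TT C
  | srcT : TT C → TT C
  | tgtT : TT C → TT C
  | unitT : TT C → TT C
  | compT : ℕ → TT C → TT C → TT C
  | xiT : TT C → TT C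

/-- Следующий bundle of quotient operations of a small candidate. -/
structure SmallOps (C : OmegaCat.{u}) : Type u where
  r : TT C → TT C → Prop
  dim' : Quot r → ℕ
  src' : Quot r → Quot r
  tgt' : Quot r → Quot r
  comp' : ℕ → Quot r → Quot r → Quot r
  unit' : Quot r → Quot r
  xi' : Quot r → Quot r

abbrev SmallOps.pre {C : OmegaCat.{u}} (d : SmallOps C) : PreOmegaCat.{u} :=
  ⟨Quot d.r, d.dim', d.src', d.tgt', d.comp', d.unit'⟩

structure OmegaLaws (P : PreOmegaCat.{u}) : Prop where
  dim_src : ∀ x, P.dim x ≠ 0 → P.dim (P.src x) = P.dim x - 1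
  dim_tgt : ∀ x, P.dim x ≠ 0 → P.dim (P.tgt x) = P.dim x - 1
  src_dim0 : ∀ x, P.dim x = 0 → P.src x = x
  tgt_dim0 : ∀ x, P.dim x = 0 → P.tgt x = x
  glob_ss : ∀ x, 2 ≤ P.dim x → P.src (P.src x) = P.src (P.tgt x)
  glob_tt : ∀ x, 2 ≤ P.dim x → P.tgt (P.src x) = P.tgt (P.tgt x)
  dim_unit : ∀ x, P.dim (P.unit x) = P.dim x + 1
  src_unit : ∀ x, P.src (P.unit x) = x
  tgt_unit : ∀ x, P.tgt (P.unit x) = x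
  dim_comp : ∀ p x y, P.Composable p x y → P.dim (P.comp p x y) = P.dim x
  src_comp_top : ∀ p x y, P.Composable p x y → P.dim x = p + 1 →
    P.src (P.comp p x y) = P.src y
  tgt_comp_top : ∀ p x y, P.Composable p x y → P.dim x = p + 1 →
    P.tgt (P.comp p x y) = P.tgt x
  src_comp : ∀ p x y, P.Composable p x y → p + 1 < P.dim x →
    P.src (P.comp p x y) = P.comp p (P.src x) (P.src y)
  tgt_comp : ∀ p x y, P.Composable p x y → p + 1 < P.dim x →
    P.tgt (P.comp p x y) = P.comp p (P.tgt x) (P.tgt y)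
  comp_assoc : ∀ p x y z, P.Composable p x y → P.Composable p y z →
    P.comp p (P.comp p x y) z = P.comp p x (P.comp p y z)
  comp_unit_src : ∀ p x, p < P.dim x →
    P.comp p x (P.unit^[P.dim x - p] (P.srcI p x)) = x
  comp_unit_tgt : ∀ p x, p < P.dim x →
    P.comp p (P.unit^[P.dim x - p] (P.tgtI p x)) x = x
  interchange : ∀ p q x y x' y', q < p →
    P.Composable p x y → P.Composable p x' y' →
    P.Composable q x x' → P.Composable q y y' →
    P.comp q (P.comp p x y) (P.comp p x' y') = P.comp p (P.comp q x x') (P.comp q y y')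
  unit_comp : ∀ p x y, P.Composable p x y →
    P.unit (P.comp p x y) = P.comp p (P.unit x) (P.unit y)

def mkOmega (P : PreOmegaCat.{u}) (h : OmegaLaws P) : OmegaCat.{u} where
  toPreOmegaCat := P
  dim_src := h.dim_src
  dim_tgt := h.dim_tgt
  src_dim0 := h.src_dim0
  tgt_dim0 := h.tgt_dim0
  glob_ss := h.glob_ss
  glob_tt := h.glob_tt
  dim_unit := h.dim_unit
  src_unit := h.src_unit
  tgt_unit := h.tgt_unit
  dim_comp := h.dim_comp
  src_comp_top := h.src_comp_top
  tgt_comp_top := h.tgt_comp_top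
  src_comp := h.src_comp
  tgt_comp := h.tgt_comp
  comp_assoc := h.comp_assoc
  comp_unit_src := h.comp_unit_src
  comp_unit_tgt := h.comp_unit_tgt
  interchange := h.interchange
  unit_comp := h.unit_comp

structure ExpLaws (P : PreOmegaCat.{u}) (o : P.Cell) (xi : P.Cell → P.Cell) : Prop where
  dim_orig : P.dim o = 0
  dim_xi : ∀ x, P.dim (xi x) = P.dim x + 1
  xi_src0 : ∀ x, P.dim x = 0 → P.src (xi x) = o
  xi_src : ∀ x, P.dim x ≠ 0 → P.src (xi x) = xi (P.tgt x)
  xi_tgt : ∀ x, P.tgt (xi x) = P.foldComp x (fun i => xi (P.srcI i x)) (P.dim x)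
  xi_comp : ∀ p x y, P.Composable p y x →
    xi (P.comp p y x) =
      P.mcomp (p + 1)
        (P.mcomp p (P.foldComp (P.tgtI (p + 1) y) (fun i => xi (P.srcI i x)) p) (xi x))
        (xi y)
  xi_unit : ∀ u, xi (P.unit u) = P.unit (xi u)
  xi_xi : ∀ u, xi (xi u) = P.unit (xi u)
  xi_orig : xi o = P.unit o

def mkExp (P : PreOmegaCat.{u}) (h : OmegaLaws P) (o : P.Cell) (xi : P.Cell → P.Cell)
    (he : ExpLaws P o xi) : Expansion (mkOmega P h) where
  orig := o
  dim_orig := he.dim_orig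
  xi := xi
  dim_xi := he.dim_xi
  xi_src0 := he.xi_src0
  xi_src := he.xi_src
  xi_tgt := he.xi_tgt
  xi_comp := he.xi_comp
  xi_unit := he.xi_unit
  xi_xi := he.xi_xi
  xi_orig := he.xi_orig

structure HomLaws (C : OmegaCat.{u}) (P : PreOmegaCat.{u}) (m : C.Cell → P.Cell) : Prop where
  map_dim : ∀ x, P.dim (m x) = C.dim x
  map_src : ∀ x, m (C.src x) = P.src (m x)
  map_tgt : ∀ x, m (C.tgt x) = P.tgt (m x)
  map_comp : ∀ p x y, C.Composable p x y → m (C.comp p x y) = P.comp p (m x) (m y)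
  map_unit : ∀ x, m (C.unit x) = P.unit (m x)

def mkFunctor (C : OmegaCat.{u}) (P : PreOmegaCat.{u}) (h : OmegaLaws P)
    (m : C.Cell → P.Cell) (hm : HomLaws C P m) : OmegaFunctor C (mkOmega P h) where
  map := m
  map_dim := hm.map_dim
  map_src := hm.map_src
  map_tgt := hm.map_tgt
  map_comp := hm.map_comp
  map_unit := hm.map_unit

def SmallOps.Good (C : OmegaCat.{u}) (d : SmallOps C) : Prop :=
  ∃ _h : OmegaLaws d.pre,
    ExpLaws d.pre (Quot.mk d.r TT.org) d.xi' ∧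
    HomLaws C d.pre (fun c => Quot.mk d.r (TT.emb c))

variable (C : OmegaCat.{u}) (X : ExpCatObj.{u}) (f : OmegaFunctor C X.cat)

def ssEval : TT C → X.cat.Cell
  | .emb c => f.map c
  | .org => X.exp.orig
  | .srcT t => X.cat.src (ssEval t)
  | .tgtT t => X.cat.tgt (ssEval t)
  | .unitT t => X.cat.unit (ssEval t)
  | .compT p a b => X.cat.comp p (ssEval a) (ssEval b)
  | .xiT t => X.exp.xi (ssEval t)

def ssRel : TT C → TT C → Prop := fun a b => ssEval C X f a = ssEval C X f b

abbrev ssOps : SmallOps C where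
  r := ssRel C X f
  dim' := Quot.lift (fun t => X.cat.dim (ssEval C X f t)) (fun _ _ h => congrArg X.cat.dim h)
  src' := Quot.lift (fun t => Quot.mk (ssRel C X f) (TT.srcT t))
    (fun _ _ h => Quot.sound (congrArg X.cat.src h))
  tgt' := Quot.lift (fun t => Quot.mk (ssRel C X f) (TT.tgtT t))
    (fun _ _ h => Quot.sound (congrArg X.cat.tgt h))
  comp' := fun p qa qb =>
    Quot.lift
      (fun a => Quot.lift (fun b => Quot.mk (ssRel C X f) (TT.compT p a b))
        (fun _ _ hb => Quot.sound (congrArg (X.cat.comp p (ssEval C X f a)) hb)) qb)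
      (fun a a' ha => by
        induction qb using Quot.ind with
        | _ b =>
          exact Quot.sound (congrArg (fun z => X.cat.comp p z (ssEval C X f b)) ha))
      qa
  unit' := Quot.lift (fun t => Quot.mk (ssRel C X f) (TT.unitT t))
    (fun _ _ h => Quot.sound (congrArg X.cat.unit h))
  xi' := Quot.lift (fun t => Quot.mk (ssRel C X f) (TT.xiT t))
    (fun _ _ h => Quot.sound (congrArg X.exp.xi h))

def ssPhi : Quot (ssRel C X f) → X.cat.Cell := Quot.lift (ssEval C X f) (fun _ _ h => h)

theorem ss_phi_mk (t : TT C) :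
    ssPhi C X f (Quot.mk (ssRel C X f) t) = ssEval C X f t := rfl

theorem ss_src_mk (t : TT C) : (ssOps C X f).pre.src (Quot.mk (ssRel C X f) t) =
    Quot.mk (ssRel C X f) (TT.srcT t) := rfl

theorem ss_tgt_mk (t : TT C) : (ssOps C X f).pre.tgt (Quot.mk (ssRel C X f) t) =
    Quot.mk (ssRel C X f) (TT.tgtT t) := rfl

theorem ss_unit_mk (t : TT C) : (ssOps C X f).pre.unit (Quot.mk (ssRel C X f) t) =
    Quot.mk (ssRel C X f) (TT.unitT t) := rfl

theorem ss_xi_mk (t : TT C) : (ssOps C X f).xi' (Quot.mk (ssRel C X f) t) =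
    Quot.mk (ssRel C X f) (TT.xiT t) := rfl

theorem ss_comp_mk (p : ℕ) (a b : TT C) :
    (ssOps C X f).pre.comp p (Quot.mk (ssRel C X f) a) (Quot.mk (ssRel C X f) b) =
      Quot.mk (ssRel C X f) (TT.compT p a b) := rfl


theorem ss_phi_mk' (t : TT C) :
    ssPhi C X f (Quot.mk (ssOps C X f).r t) = ssEval C X f t := rfl

theorem ss_src_mk' (t : TT C) : (ssOps C X f).pre.src (Quot.mk (ssOps C X f).r t) =
    Quot.mk (ssOps C X f).r (TT.srcT t) := rfl

theorem ss_tgt_mk' (t : TT C) : (ssOps C X f).pre.tgt (Quot.mk (ssOps C X f).r t) =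
    Quot.mk (ssOps C X f).r (TT.tgtT t) := rfl

theorem ss_unit_mk' (t : TT C) : (ssOps C X f).pre.unit (Quot.mk (ssOps C X f).r t) =
    Quot.mk (ssOps C X f).r (TT.unitT t) := rfl

theorem ss_xi_mk' (t : TT C) : (ssOps C X f).xi' (Quot.mk (ssOps C X f).r t) =
    Quot.mk (ssOps C X f).r (TT.xiT t) := rfl

theorem ss_comp_mk' (p : ℕ) (a b : TT C) :
    (ssOps C X f).pre.comp p (Quot.mk (ssOps C X f).r a) (Quot.mk (ssOps C X f).r b) =
      Quot.mk (ssOps C X f).r (TT.compT p a b) := rfl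

theorem ss_sound {a b : TT C} (h : ssEval C X f a = ssEval C X f b) :
    Quot.mk (ssOps C X f).r a = Quot.mk (ssOps C X f).r b := Quot.sound h

theorem phi_inj {qa qb : Quot (ssRel C X f)}
    (h : ssPhi C X f qa = ssPhi C X f qb) : qa = qb := by
  induction qa using Quot.ind with
  | _ a =>
    induction qb using Quot.ind with
    | _ b => exact Quot.sound h

theorem phi_dim (q : Quot (ssRel C X f)) :
    (ssOps C X f).pre.dim q = X.cat.dim (ssPhi C X f q) := by
  induction q using Quot.ind with
  | _ t => rfl

theorem phi_src (q : Quot (ssRel C X f)) :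
    ssPhi C X f ((ssOps C X f).pre.src q) = X.cat.src (ssPhi C X f q) := by
  induction q using Quot.ind with
  | _ t =>
      rw [ss_src_mk, ss_phi_mk, ss_phi_mk]
      simp only [ssEval]

theorem phi_tgt (q : Quot (ssRel C X f)) :
    ssPhi C X f ((ssOps C X f).pre.tgt q) = X.cat.tgt (ssPhi C X f q) := by
  induction q using Quot.ind with
  | _ t =>
      rw [ss_tgt_mk, ss_phi_mk, ss_phi_mk]
      simp only [ssEval]

theorem phi_unit (q : Quot (ssRel C X f)) :
    ssPhi C X f ((ssOps C X f).pre.unit q) = X.cat.unit (ssPhi C X f q) := by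
  induction q using Quot.ind with
  | _ t =>
      rw [ss_unit_mk, ss_phi_mk, ss_phi_mk]
      simp only [ssEval]

theorem phi_xi (q : Quot (ssRel C X f)) :
    ssPhi C X f ((ssOps C X f).xi' q) = X.exp.xi (ssPhi C X f q) := by
  induction q using Quot.ind with
  | _ t =>
      rw [ss_xi_mk, ss_phi_mk, ss_phi_mk]
      simp only [ssEval]

theorem phi_comp (p : ℕ) (qa qb : Quot (ssRel C X f)) :
    ssPhi C X f ((ssOps C X f).pre.comp p qa qb) =
      X.cat.comp p (ssPhi C X f qa) (ssPhi C X f qb) := by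
  induction qa using Quot.ind with
  | _ a =>
    induction qb using Quot.ind with
    | _ b =>
        rw [ss_comp_mk, ss_phi_mk, ss_phi_mk, ss_phi_mk]
        simp only [ssEval]

theorem phi_iter_src (k : ℕ) (q : Quot (ssRel C X f)) :
    ssPhi C X f ((ssOps C X f).pre.src^[k] q) = X.cat.src^[k] (ssPhi C X f q) := by
  induction k with
  | zero => rfl
  | succ k ih =>
      rw [Function.iterate_succ_apply', Function.iterate_succ_apply', phi_src, ih]

theorem phi_iter_tgt (k : ℕ) (q : Quot (ssRel C X f)) :
    ssPhi C X f ((ssOps C X f).pre.tgt^[k] q) = X.cat.tgt^[k] (ssPhi C X f q) := by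
  induction k with
  | zero => rfl
  | succ k ih =>
      rw [Function.iterate_succ_apply', Function.iterate_succ_apply', phi_tgt, ih]

theorem phi_iter_unit (k : ℕ) (q : Quot (ssRel C X f)) :
    ssPhi C X f ((ssOps C X f).pre.unit^[k] q) = X.cat.unit^[k] (ssPhi C X f q) := by
  induction k with
  | zero => rfl
  | succ k ih =>
      rw [Function.iterate_succ_apply', Function.iterate_succ_apply', phi_unit, ih]

theorem phi_srcI (p : ℕ) (q : Quot (ssRel C X f)) :
    ssPhi C X f ((ssOps C X f).pre.srcI p q) = X.cat.srcI p (ssPhi C X f q) := by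
  unfold PreOmegaCat.srcI
  rw [phi_iter_src, phi_dim]

theorem phi_tgtI (p : ℕ) (q : Quot (ssRel C X f)) :
    ssPhi C X f ((ssOps C X f).pre.tgtI p q) = X.cat.tgtI p (ssPhi C X f q) := by
  unfold PreOmegaCat.tgtI
  rw [phi_iter_tgt, phi_dim]

theorem phi_pad (m : ℕ) (q : Quot (ssRel C X f)) :
    ssPhi C X f ((ssOps C X f).pre.pad m q) = X.cat.pad m (ssPhi C X f q) := by
  unfold PreOmegaCat.pad
  rw [phi_iter_unit, phi_dim]

theorem phi_composable {p : ℕ} {qa qb : Quot (ssRel C X f)}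
    (h : (ssOps C X f).pre.Composable p qa qb) :
    X.cat.Composable p (ssPhi C X f qa) (ssPhi C X f qb) := by
  obtain ⟨h1, h2, h3⟩ := h
  refine ⟨by rw [← phi_dim]; exact h1, by rw [← phi_dim, ← phi_dim]; exact h2, ?_⟩
  rw [← phi_srcI, ← phi_tgtI, h3]

theorem phi_mcomp (p : ℕ) (qa qb : Quot (ssRel C X f)) :
    ssPhi C X f ((ssOps C X f).pre.mcomp p qa qb) =
      X.cat.mcomp p (ssPhi C X f qa) (ssPhi C X f qb) := by
  unfold PreOmegaCat.mcomp
  rw [phi_comp, phi_pad, phi_pad, phi_dim, phi_dim]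

theorem phi_fold (k : ℕ) (b : Quot (ssRel C X f)) (s : ℕ → Quot (ssRel C X f)) :
    ssPhi C X f ((ssOps C X f).pre.foldComp b s k) =
      X.cat.foldComp (ssPhi C X f b) (fun i => ssPhi C X f (s i)) k := by
  induction k with
  | zero => rfl
  | succ k ih =>
      simp only [PreOmegaCat.foldComp]
      rw [phi_mcomp, ih]

end SolutionSet

section SolutionSet2

open CategoryTheory

variable (C : OmegaCat.{u}) (X : ExpCatObj.{u}) (f : OmegaFunctor C X.cat)

theorem ssOmegaLaws : OmegaLaws (ssOps C X f).pre where
  dim_src x _ := by rw [phi_dim, phi_src, dim_src' X.cat, phi_dim]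
  dim_tgt x _ := by rw [phi_dim, phi_tgt, dim_tgt' X.cat, phi_dim]
  src_dim0 x h := phi_inj C X f (by
    rw [phi_src]
    exact X.cat.src_dim0 _ (by rw [← phi_dim]; exact h))
  tgt_dim0 x h := phi_inj C X f (by
    rw [phi_tgt]
    exact X.cat.tgt_dim0 _ (by rw [← phi_dim]; exact h))
  glob_ss x h := phi_inj C X f (by
    rw [phi_src, phi_src, phi_src, phi_tgt]
    exact X.cat.glob_ss _ (by rw [← phi_dim]; exact h))
  glob_tt x h := phi_inj C X f (by
    rw [phi_tgt, phi_src, phi_tgt, phi_tgt]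
    exact X.cat.glob_tt _ (by rw [← phi_dim]; exact h))
  dim_unit x := by rw [phi_dim, phi_unit, X.cat.dim_unit, phi_dim]
  src_unit x := phi_inj C X f (by rw [phi_src, phi_unit]; exact X.cat.src_unit _)
  tgt_unit x := phi_inj C X f (by rw [phi_tgt, phi_unit]; exact X.cat.tgt_unit _)
  dim_comp p x y h := by
    rw [phi_dim, phi_comp, X.cat.dim_comp p _ _ (phi_composable C X f h), phi_dim]
  src_comp_top p x y h ht := phi_inj C X f (by
    rw [phi_src, phi_src, phi_comp]
    exact X.cat.src_comp_top p _ _ (phi_composable C X f h) (by rw [← phi_dim]; exact ht))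
  tgt_comp_top p x y h ht := phi_inj C X f (by
    rw [phi_tgt, phi_tgt, phi_comp]
    exact X.cat.tgt_comp_top p _ _ (phi_composable C X f h) (by rw [← phi_dim]; exact ht))
  src_comp p x y h hl := phi_inj C X f (by
    rw [phi_src, phi_comp, phi_comp, phi_src, phi_src]
    exact X.cat.src_comp p _ _ (phi_composable C X f h) (by rw [← phi_dim]; exact hl))
  tgt_comp p x y h hl := phi_inj C X f (by
    rw [phi_tgt, phi_comp, phi_comp, phi_tgt, phi_tgt]
    exact X.cat.tgt_comp p _ _ (phi_composable C X f h) (by rw [← phi_dim]; exact hl))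
  comp_assoc p x y z h1 h2 := phi_inj C X f (by
    rw [phi_comp, phi_comp, phi_comp, phi_comp]
    exact X.cat.comp_assoc p _ _ _ (phi_composable C X f h1) (phi_composable C X f h2))
  comp_unit_src p x hp := phi_inj C X f (by
    rw [phi_comp, phi_iter_unit, phi_srcI, phi_dim]
    exact X.cat.comp_unit_src p _ (by rw [← phi_dim]; exact hp))
  comp_unit_tgt p x hp := phi_inj C X f (by
    rw [phi_comp, phi_iter_unit, phi_tgtI, phi_dim]
    exact X.cat.comp_unit_tgt p _ (by rw [← phi_dim]; exact hp))
  interchange p q x y x' y' hqp h1 h2 h3 h4 := phi_inj C X f (by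
    rw [phi_comp, phi_comp, phi_comp, phi_comp, phi_comp, phi_comp]
    exact X.cat.interchange p q _ _ _ _ hqp (phi_composable C X f h1)
      (phi_composable C X f h2) (phi_composable C X f h3) (phi_composable C X f h4))
  unit_comp p x y h := phi_inj C X f (by
    rw [phi_unit, phi_comp, phi_comp, phi_unit, phi_unit]
    exact X.cat.unit_comp p _ _ (phi_composable C X f h))

theorem ssExpLaws :
    ExpLaws (ssOps C X f).pre (Quot.mk (ssOps C X f).r TT.org) (ssOps C X f).xi' where
  dim_orig := by
    rw [phi_dim, ss_phi_mk']
    simp only [ssEval]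
    exact X.exp.dim_orig
  dim_xi u := by rw [phi_dim, phi_xi, X.exp.dim_xi, phi_dim]
  xi_src0 u h := phi_inj C X f (by
    rw [phi_src, phi_xi, ss_phi_mk']
    simp only [ssEval]
    exact X.exp.xi_src0 _ (by rw [← phi_dim]; exact h))
  xi_src u h := phi_inj C X f (by
    rw [phi_src, phi_xi, phi_xi, phi_tgt]
    exact X.exp.xi_src _ (fun h0 => h (by rw [phi_dim]; exact h0)))
  xi_tgt u := phi_inj C X f (by
    rw [phi_tgt, phi_xi, phi_fold, X.exp.xi_tgt (ssPhi C X f u), phi_dim]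
    exact foldComp_congr X.cat _ _ (fun i hi => by rw [phi_xi, phi_srcI])
  )
  xi_comp p x y hc := phi_inj C X f (by
    rw [phi_xi, phi_comp, X.exp.xi_comp p (ssPhi C X f x) (ssPhi C X f y)
      (phi_composable C X f hc), phi_mcomp, phi_mcomp, phi_fold, phi_xi, phi_xi, phi_tgtI]
    have hfold : X.cat.foldComp (X.cat.tgtI (p+1) (ssPhi C X f y))
        (fun i => X.exp.xi (X.cat.srcI i (ssPhi C X f x))) p =
        X.cat.foldComp (X.cat.tgtI (p+1) (ssPhi C X f y))
          (fun i => ssPhi C X f ((ssOps C X f).xi' ((ssOps C X f).pre.srcI i x))) p :=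
      foldComp_congr X.cat _ _ (fun i hi => by rw [phi_xi, phi_srcI])
    rw [hfold])
  xi_unit u := phi_inj C X f (by
    rw [phi_xi, phi_unit, phi_unit, phi_xi]
    exact X.exp.xi_unit _)
  xi_xi u := phi_inj C X f (by
    rw [phi_xi, phi_xi, phi_unit, phi_xi]
    exact X.exp.xi_xi _)
  xi_orig := phi_inj C X f (by
    rw [phi_xi, phi_unit, ss_phi_mk']
    simp only [ssEval]
    exact X.exp.xi_orig)

theorem ssHomLaws :
    HomLaws C (ssOps C X f).pre (fun c => Quot.mk (ssOps C X f).r (TT.emb c)) where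
  map_dim c := by
    rw [phi_dim, ss_phi_mk']
    simp only [ssEval]
    exact f.map_dim c
  map_src c := by
    rw [ss_src_mk']
    exact ss_sound C X f (by simp only [ssEval]; exact f.map_src c)
  map_tgt c := by
    rw [ss_tgt_mk']
    exact ss_sound C X f (by simp only [ssEval]; exact f.map_tgt c)
  map_comp p a b h := by
    rw [ss_comp_mk']
    exact ss_sound C X f (by simp only [ssEval]; exact f.map_comp p a b h)
  map_unit c := by
    rw [ss_unit_mk']
    exact ss_sound C X f (by simp only [ssEval]; exact f.map_unit c)

theorem ssGood : SmallOps.Good C (ssOps C X f) :=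
  ⟨ssOmegaLaws C X f, ssExpLaws C X f, ssHomLaws C X f⟩

theorem forget_solutionSet : SolutionSetCondition.{u} (forgetExp.{u}) := by
  intro C
  refine ⟨{ d : SmallOps C // SmallOps.Good C d },
    fun i => ⟨mkOmega i.1.pre i.2.choose,
      mkExp i.1.pre i.2.choose _ _ i.2.choose_spec.1⟩,
    fun i => mkFunctor C i.1.pre i.2.choose _ i.2.choose_spec.2, ?_⟩
  intro X h
  refine ⟨⟨ssOps C X h, ssGood C X h⟩, ?_, ?_⟩
  · exact
      { func :=
          { map := ssPhi C X h
            map_dim := fun q => (phi_dim C X h q).symm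
            map_src := phi_src C X h
            map_tgt := phi_tgt C X h
            map_comp := fun p a b _ => phi_comp C X h p a b
            map_unit := phi_unit C X h }
        map_orig := by
          show ssPhi C X h (Quot.mk (ssOps C X h).r TT.org) = X.exp.orig
          rw [ss_phi_mk' C X h]
          simp only [ssEval]
        map_xi := phi_xi C X h }
  · apply OmegaFunctor.ext
    funext c
    show ssPhi C X h (Quot.mk (ssOps C X h).r (TT.emb c)) = OmegaFunctor.map h c
    rw [ss_phi_mk' C X h]
    simp only [ssEval]

end SolutionSet2

end OmegaLemmas

/-- The forgetful functor `U : Exp → ωCat`, from the category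
of strict ω-categories endowed with an expansion to the category of strict
ω-categories, admits a left adjoint. -/
theorem statement2 : (forgetExp.{u}).IsRightAdjoint := by
  exact CategoryTheory.isRightAdjoint_of_preservesLimits_of_solutionSetCondition _
    OmegaLemmas.forget_solutionSet

end Orientals

end
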